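/- arXiv:1611.01732 — 7 statements merged into one kernel-verified Lean document; each statement's English description precedes it below -/
import Mathlib

section
/- For the noise-free Hegselmann–Krause model, for every initial opinion vector x(0) ∈ ℝ^n there exist a finite time T and real numbers x_1*, …, x_n* such that x_i(t) = x_i* for all t ≥ T and all i, and for every pair i, j either x_i* = x_j* or |x_i* − x_j*| > ε. -/
/-- Neighbor set of agent `i` in the Hegselmann–Krause model with confidence threshold `ε`. -/
noncomputable def hkNbr {n : ℕ} (ε : ℝ) (x : Fin n → ℝ) (i : Fin n) : Finset (Fin n) :=
  Finset.univ.filter fun j => |x j - x i| ≤ ε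

namespace HKaux

variable {n : ℕ}

lemma mem_hkNbr {ε : ℝ} {x : Fin n → ℝ} {i j : Fin n} :
    j ∈ hkNbr ε x i ↔ |x j - x i| ≤ ε := by simp [hkNbr]

lemma self_mem_hkNbr {ε : ℝ} (hε : 0 ≤ ε) (x : Fin n → ℝ) (i : Fin n) :
    i ∈ hkNbr ε x i := by simp [mem_hkNbr, hε]

lemma hkNbr_symm {ε : ℝ} {x : Fin n → ℝ} {i j : Fin n} (h : j ∈ hkNbr ε x i) :
    i ∈ hkNbr ε x j := by rw [mem_hkNbr] at h ⊢; rwa [abs_sub_comm]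

lemma hkNbr_card_le (ε : ℝ) (x : Fin n → ℝ) (i : Fin n) :
    (hkNbr ε x i).card ≤ n := by
  simpa using Finset.card_le_univ (hkNbr ε x i)

lemma avg_ge {F : Finset (Fin n)} (hF : F.Nonempty) {f : Fin n → ℝ} {lo : ℝ}
    (hlo : ∀ j ∈ F, lo ≤ f j) : lo ≤ (∑ j ∈ F, f j) / F.card := by
  have hc : (0:ℝ) < F.card := by exact_mod_cast Finset.card_pos.mpr hF
  rw [le_div_iff₀ hc]
  calc lo * F.card = ∑ _j ∈ F, lo := by rw [Finset.sum_const, nsmul_eq_mul, mul_comm]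
  _ ≤ ∑ j ∈ F, f j := Finset.sum_le_sum hlo

lemma avg_le {F : Finset (Fin n)} (hF : F.Nonempty) {f : Fin n → ℝ} {hi : ℝ}
    (hhi : ∀ j ∈ F, f j ≤ hi) : (∑ j ∈ F, f j) / F.card ≤ hi := by
  have hc : (0:ℝ) < F.card := by exact_mod_cast Finset.card_pos.mpr hF
  rw [div_le_iff₀ hc]
  calc ∑ j ∈ F, f j ≤ ∑ _j ∈ F, hi := Finset.sum_le_sum hhi
  _ = hi * F.card := by rw [Finset.sum_const, nsmul_eq_mul, mul_comm]

lemma avg_bump {F : Finset (Fin n)} {f : Fin n → ℝ} {m w : ℝ}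
    (hm : ∀ j ∈ F, m ≤ f j) (hcn : F.card ≤ n) (hw : m ≤ w)
    {j0 : Fin n} (hj0 : j0 ∈ F) (hwj : w ≤ f j0) :
    m + (w - m) / n ≤ (∑ j ∈ F, f j) / F.card := by
  have hFne : F.Nonempty := ⟨j0, hj0⟩
  have hc0 : 0 < F.card := Finset.card_pos.mpr hFne
  have hc : (0:ℝ) < F.card := by exact_mod_cast hc0
  have hn : (0:ℝ) < n := lt_of_lt_of_le hc (by exact_mod_cast hcn)
  have hsum : F.card * m + (w - m) ≤ ∑ j ∈ F, f j := by
    have h1 : ∑ j ∈ F.erase j0, f j + f j0 = ∑ j ∈ F, f j :=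
      Finset.sum_erase_add F f hj0
    have h2 : (F.erase j0).card • m ≤ ∑ j ∈ F.erase j0, f j :=
      Finset.card_nsmul_le_sum _ _ _ (fun j hj => hm j (Finset.mem_of_mem_erase hj))
    have h3 : (F.erase j0).card = F.card - 1 := Finset.card_erase_of_mem hj0
    have h4 : ((F.card - 1 : ℕ) : ℝ) = (F.card : ℝ) - 1 := by
      have : 1 ≤ F.card := hc0
      push_cast [this]; ring
    rw [← h1]
    have : ((F.erase j0).card : ℝ) * m = (F.card : ℝ) * m - m := by
      rw [h3, h4]; ring
    nlinarith [h2, nsmul_eq_mul ((F.erase j0).card) m]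
  have key : m + (w - m) / F.card ≤ (∑ j ∈ F, f j) / F.card := by
    rw [le_div_iff₀ hc]
    calc (m + (w - m) / F.card) * F.card = F.card * m + (w - m) := by
          field_simp
    _ ≤ _ := hsum
  refine le_trans (add_le_add_right ?_ m) key
  exact div_le_div_of_nonneg_left (by linarith) hc (by exact_mod_cast hcn)

lemma sum_nbr_swap (ε : ℝ) (u : Fin n → ℝ) (f : Fin n → Fin n → ℝ) :
    ∑ i, ∑ j ∈ hkNbr ε u i, f i j = ∑ i, ∑ j ∈ hkNbr ε u i, f j i := by
  have h1 : ∀ (g : Fin n → Fin n → ℝ), ∑ i, ∑ j ∈ hkNbr ε u i, g i j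
      = ∑ i, ∑ j, if j ∈ hkNbr ε u i then g i j else 0 := by
    intro g; refine Finset.sum_congr rfl fun i _ => ?_
    rw [Finset.sum_ite_mem, Finset.univ_inter]
  rw [h1, h1, Finset.sum_comm]
  refine Finset.sum_congr rfl fun i _ => Finset.sum_congr rfl fun j _ => ?_
  exact if_congr ⟨fun h => hkNbr_symm h, fun h => hkNbr_symm h⟩ rfl rfl

lemma energy_step {ε : ℝ} (hε : 0 ≤ ε) (u u' : Fin n → ℝ)
    (hu' : ∀ i, u' i = (∑ j ∈ hkNbr ε u i, u j) / ((hkNbr ε u i).card : ℝ)) :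
    (∑ i, ∑ j, min ((u' i - u' j)^2) (ε^2)) + 4 * ∑ i, (u' i - u i)^2
      ≤ ∑ i, ∑ j, min ((u i - u j)^2) (ε^2) := by
  set N : Fin n → Finset (Fin n) := fun i => hkNbr ε u i with hN
  have hself : ∀ i, i ∈ N i := fun i => self_mem_hkNbr hε u i
  have hcpos : ∀ i, (0:ℝ) < (N i).card := by
    intro i; exact_mod_cast Finset.card_pos.mpr ⟨i, hself i⟩
  have hmean : ∀ i, ∑ j ∈ N i, u j = ((N i).card : ℝ) * u' i := by
    intro i
    have hc : ((N i).card : ℝ) ≠ 0 := ne_of_gt (hcpos i)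
    have h := (eq_div_iff hc).mp (hu' i)
    rw [← h]; ring
  have F3 : ∀ i, ∑ j ∈ N i, (u' i - u j) = 0 := by
    intro i
    rw [Finset.sum_sub_distrib, Finset.sum_const, hmean, nsmul_eq_mul]
    ring
  have F4 : ∀ i, ∑ j ∈ N i, (u j - u i) = ((N i).card : ℝ) * (u' i - u i) := by
    intro i
    rw [Finset.sum_sub_distrib, Finset.sum_const, hmean, nsmul_eq_mul]
    ring
  -- Step 1 : E u as an ite-sum
  have hEu : ∑ i, ∑ j, min ((u i - u j)^2) (ε^2)
      = ∑ i, ∑ j, (if j ∈ N i then (u i - u j)^2 else ε^2) := by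
    refine Finset.sum_congr rfl fun i _ => Finset.sum_congr rfl fun j _ => ?_
    by_cases h : j ∈ N i
    · rw [if_pos h]
      refine min_eq_left ?_
      have : |u j - u i| ≤ ε := mem_hkNbr.mp h
      calc (u i - u j)^2 = |u j - u i|^2 := by rw [← abs_sub_comm, sq_abs]
      _ ≤ ε^2 := by nlinarith [abs_nonneg (u j - u i)]
    · rw [if_neg h]
      refine min_eq_right ?_
      have : ε < |u j - u i| := not_le.mp (fun hle => h (mem_hkNbr.mpr hle))
      calc ε^2 ≤ |u j - u i|^2 := by nlinarith [abs_nonneg (u j - u i)]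
      _ = (u i - u j)^2 := by rw [← abs_sub_comm, sq_abs]
  have hEu' : ∑ i, ∑ j, min ((u' i - u' j)^2) (ε^2)
      ≤ ∑ i, ∑ j, (if j ∈ N i then (u' i - u' j)^2 else ε^2) := by
    refine Finset.sum_le_sum fun i _ => Finset.sum_le_sum fun j _ => ?_
    by_cases h : j ∈ N i
    · rw [if_pos h]; exact min_le_left _ _
    · rw [if_neg h]; exact min_le_right _ _
  -- Step 2 : reduce to sums over neighborhoods
  have hdiff : ∑ i, ∑ j, (if j ∈ N i then (u i - u j)^2 else ε^2)
      - ∑ i, ∑ j, (if j ∈ N i then (u' i - u' j)^2 else ε^2)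
      = ∑ i, ∑ j ∈ N i, ((u i - u j)^2 - (u' i - u' j)^2) := by
    rw [← Finset.sum_sub_distrib]
    refine Finset.sum_congr rfl fun i _ => ?_
    rw [← Finset.sum_sub_distrib]
    rw [show (∑ j, ((if j ∈ N i then (u i - u j)^2 else ε^2)
        - (if j ∈ N i then (u' i - u' j)^2 else ε^2)))
      = ∑ j, (if j ∈ N i then ((u i - u j)^2 - (u' i - u' j)^2) else 0) from
      Finset.sum_congr rfl fun j _ => by by_cases h : j ∈ N i <;> simp [h]]
    rw [Finset.sum_ite_mem, Finset.univ_inter]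
  -- Step 3 : the key algebraic identity
  have key : ∑ i, ∑ j ∈ N i, ((u i - u j)^2 - (u' i - u' j)^2)
      = ∑ i, ∑ j ∈ N i, ((u' i - u i) + (u' j - u j))^2 := by
    have per_i : ∀ i, ∑ j ∈ N i, ((u i - u j)^2 - (u' i - u' j)^2)
        = ((N i).card : ℝ) * (u' i - u i)^2
          + ∑ j ∈ N i, (2 * (u' j - u j) * (u' i - u i))
          + ∑ j ∈ N i, (2 * (u' j - u j) * (u i - u j))
          - ∑ j ∈ N i, (u' j - u j)^2 := by
      intro i
      have expand : ∑ j ∈ N i, ((u i - u j)^2 - (u' i - u' j)^2)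
          = ∑ j ∈ N i, ((-(2*(u' i - u i))) * (u' i - u j)
              + ((u' i - u i)^2
                + ((2 * (u' j - u j) * (u' i - u i))
                  + ((2 * (u' j - u j) * (u i - u j))
                    - (u' j - u j)^2)))) :=
        Finset.sum_congr rfl fun j _ => by ring
      rw [expand, Finset.sum_add_distrib, ← Finset.mul_sum, F3 i, mul_zero, zero_add,
        Finset.sum_add_distrib, Finset.sum_const, nsmul_eq_mul,
        Finset.sum_add_distrib, Finset.sum_sub_distrib]
      ring
    have G1 : ∑ i, ∑ j ∈ N i, (u' j - u j)^2
        = ∑ i, ((N i).card : ℝ) * (u' i - u i)^2 := by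
      rw [sum_nbr_swap ε u (fun i j => (u' j - u j)^2)]
      exact Finset.sum_congr rfl fun i _ => by
        rw [Finset.sum_const, nsmul_eq_mul]
    have G2 : ∑ i, ∑ j ∈ N i, (2 * (u' j - u j) * (u i - u j))
        = 2 * ∑ i, ((N i).card : ℝ) * (u' i - u i)^2 := by
      rw [sum_nbr_swap ε u (fun i j => 2 * (u' j - u j) * (u i - u j)), Finset.mul_sum]
      refine Finset.sum_congr rfl fun i _ => ?_
      rw [show (∑ j ∈ N i, 2 * (u' i - u i) * (u j - u i))
          = (2 * (u' i - u i)) * ∑ j ∈ N i, (u j - u i) by rw [Finset.mul_sum]]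
      rw [F4 i]; ring
    have hL : ∑ i, ∑ j ∈ N i, ((u i - u j)^2 - (u' i - u' j)^2)
        = (∑ i, ((N i).card : ℝ) * (u' i - u i)^2)
          + (∑ i, ∑ j ∈ N i, (2 * (u' j - u j) * (u' i - u i)))
          + 2 * (∑ i, ((N i).card : ℝ) * (u' i - u i)^2)
          - (∑ i, ((N i).card : ℝ) * (u' i - u i)^2) := by
      rw [Finset.sum_congr rfl (fun i _ => per_i i), Finset.sum_sub_distrib,
        Finset.sum_add_distrib, Finset.sum_add_distrib, G1, G2]
    have hR : ∑ i, ∑ j ∈ N i, ((u' i - u i) + (u' j - u j))^2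
        = (∑ i, ∑ j ∈ N i, (2 * (u' j - u j) * (u' i - u i)))
          + (∑ i, ((N i).card : ℝ) * (u' i - u i)^2)
          + (∑ i, ((N i).card : ℝ) * (u' i - u i)^2) := by
      have expand : ∀ i, ∑ j ∈ N i, ((u' i - u i) + (u' j - u j))^2
          = ∑ j ∈ N i, ((2 * (u' j - u j) * (u' i - u i))
              + ((u' i - u i)^2 + (u' j - u j)^2)) :=
        fun i => Finset.sum_congr rfl fun j _ => by ring
      rw [Finset.sum_congr rfl (fun i _ => expand i)]
      rw [show (∑ i, ∑ j ∈ N i, ((2 * (u' j - u j) * (u' i - u i))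
              + ((u' i - u i)^2 + (u' j - u j)^2)))
          = ∑ i, ((∑ j ∈ N i, (2 * (u' j - u j) * (u' i - u i)))
              + ((∑ _j ∈ N i, (u' i - u i)^2) + ∑ j ∈ N i, (u' j - u j)^2)) from
        Finset.sum_congr rfl fun i _ => by
          rw [Finset.sum_add_distrib, Finset.sum_add_distrib]]
      rw [Finset.sum_add_distrib, Finset.sum_add_distrib, G1]
      rw [show (∑ i, ∑ _j ∈ N i, (u' i - u i)^2)
          = ∑ i, ((N i).card : ℝ) * (u' i - u i)^2 from
        Finset.sum_congr rfl fun i _ => by rw [Finset.sum_const, nsmul_eq_mul]]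
      ring
    rw [hL, hR]; ring
  -- Step 4 : lower bound the identity sum by the diagonal terms
  have hdiag : 4 * ∑ i, (u' i - u i)^2
      ≤ ∑ i, ∑ j ∈ N i, ((u' i - u i) + (u' j - u j))^2 := by
    rw [Finset.mul_sum]
    refine Finset.sum_le_sum fun i _ => ?_
    have h1 : ((u' i - u i) + (u' i - u i))^2
        ≤ ∑ j ∈ N i, ((u' i - u i) + (u' j - u j))^2 :=
      Finset.single_le_sum (f := fun j => ((u' i - u i) + (u' j - u j))^2)
        (fun j _ => sq_nonneg _) (hself i)
    nlinarith [h1]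
  linarith [hEu, hEu', hdiff, key, hdiag]
lemma disp_tendsto_zero {ε : ℝ} (hε : 0 ≤ ε) (x : ℕ → Fin n → ℝ)
    (hupd : ∀ t i, x (t + 1) i =
      (∑ j ∈ hkNbr ε (x t) i, x t j) / ((hkNbr ε (x t) i).card : ℝ))
    {η : ℝ} (hη : 0 < η) :
    ∃ T, ∀ t, T ≤ t → ∀ i, |x (t+1) i - x t i| ≤ η := by
  set E : ℕ → ℝ := fun t => ∑ i, ∑ j, min ((x t i - x t j)^2) (ε^2) with hE
  set a : ℕ → ℝ := fun t => ∑ i, (x (t+1) i - x t i)^2 with ha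
  have hstep : ∀ t, E (t+1) + 4 * a t ≤ E t := by
    intro t
    exact energy_step hε (x t) (x (t+1)) (fun i => hupd t i)
  have hE0 : ∀ t, 0 ≤ E t := by
    intro t
    exact Finset.sum_nonneg fun i _ => Finset.sum_nonneg fun j _ =>
      le_min (sq_nonneg _) (sq_nonneg _)
  have ha0 : ∀ t, 0 ≤ a t := fun t => Finset.sum_nonneg fun i _ => sq_nonneg _
  have hpart : ∀ T, E T + 4 * ∑ t ∈ Finset.range T, a t ≤ E 0 := by
    intro T
    induction T with
    | zero => simp
    | succ T ih =>
      rw [Finset.sum_range_succ]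
      have := hstep T
      linarith
  have hbound : ∀ T, ∑ t ∈ Finset.range T, a t ≤ E 0 / 4 := by
    intro T
    have := hpart T
    have := hE0 T
    linarith
  have hsummable : Summable a := summable_of_sum_range_le ha0 hbound
  have htends : Filter.Tendsto a Filter.atTop (nhds 0) := hsummable.tendsto_atTop_zero
  rw [Metric.tendsto_atTop] at htends
  obtain ⟨T, hT⟩ := htends (η^2) (by positivity)
  refine ⟨T, fun t ht i => ?_⟩
  have h1 := hT t ht
  rw [Real.dist_eq, sub_zero, abs_of_nonneg (ha0 t)] at h1
  have h2 : (x (t+1) i - x t i)^2 ≤ a t :=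
    Finset.single_le_sum (f := fun i => (x (t+1) i - x t i)^2)
      (fun j _ => sq_nonneg _) (Finset.mem_univ i)
  by_contra hcon
  push_neg at hcon
  have : η^2 < (x (t+1) i - x t i)^2 := by
    have h3 : η < |x (t+1) i - x t i| := hcon
    nlinarith [abs_nonneg (x (t+1) i - x t i), sq_abs (x (t+1) i - x t i)]
  linarith

lemma subsystem {ε : ℝ} (x : ℕ → Fin n → ℝ)
    (hupd : ∀ t i, x (t + 1) i =
      (∑ j ∈ hkNbr ε (x t) i, x t j) / ((hkNbr ε (x t) i).card : ℝ))
    (S : Finset (Fin n)) (t0 : ℕ)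
    (hcl : ∀ t, t0 ≤ t → ∀ i ∈ S, hkNbr ε (x t) i ⊆ S)
    (hIH : ∀ (y : ℕ → Fin S.card → ℝ),
      (∀ t a, y (t + 1) a =
        (∑ b ∈ hkNbr ε (y t) a, y t b) / ((hkNbr ε (y t) a).card : ℝ)) →
      ∃ (T : ℕ) (ys : Fin S.card → ℝ), (∀ t, T ≤ t → ∀ a, y t a = ys a) ∧
        (∀ a b, ys a = ys b ∨ ε < |ys a - ys b|)) :
    ∃ T, t0 ≤ T ∧ (∀ t, T ≤ t → ∀ i ∈ S, x t i = x T i) ∧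
      (∀ i, i ∈ S → ∀ j, j ∈ S → x T i = x T j ∨ ε < |x T i - x T j|) := by
  classical
  set e := S.equivFin with he
  set g : Fin S.card → Fin n := fun a => ((e.symm a : S) : Fin n) with hg
  have hgS : ∀ a, g a ∈ S := fun a => (e.symm a).2
  have hginj : Function.Injective g := fun a b h =>
    e.symm.injective (Subtype.coe_injective h)
  have hge : ∀ (j : Fin n) (hj : j ∈ S), g (e ⟨j, hj⟩) = j := by
    intro j hj
    simp [hg, Equiv.symm_apply_apply]
  set y : ℕ → Fin S.card → ℝ := fun t a => x (t0 + t) (g a) with hy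
  have himg : ∀ t a, hkNbr ε (x (t0 + t)) (g a) = Finset.image g (hkNbr ε (y t) a) := by
    intro t a
    ext j
    constructor
    · intro hj
      have hjS : j ∈ S := hcl (t0 + t) (Nat.le_add_right _ _) (g a) (hgS a) hj
      refine Finset.mem_image.mpr ⟨e ⟨j, hjS⟩, ?_, hge j hjS⟩
      rw [mem_hkNbr]
      show |x (t0 + t) (g (e ⟨j, hjS⟩)) - x (t0 + t) (g a)| ≤ ε
      rw [hge j hjS]
      exact mem_hkNbr.mp hj
    · intro hj
      obtain ⟨b, hb, rfl⟩ := Finset.mem_image.mp hj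
      have hb' : |y t b - y t a| ≤ ε := mem_hkNbr.mp hb
      exact mem_hkNbr.mpr hb'
  have hupdy : ∀ t a, y (t + 1) a =
      (∑ b ∈ hkNbr ε (y t) a, y t b) / ((hkNbr ε (y t) a).card : ℝ) := by
    intro t a
    have h1 : y (t + 1) a = x ((t0 + t) + 1) (g a) := by
      rw [hy]; ring_nf
    rw [h1, hupd (t0 + t) (g a), himg t a,
      Finset.card_image_of_injective _ hginj,
      Finset.sum_image (fun b _ c _ h => hginj h)]
  obtain ⟨Ty, ys, h1, h2⟩ := hIH y hupdy
  have hval : ∀ t, t0 + Ty ≤ t → ∀ (i) (hi : i ∈ S), x t i = ys (e ⟨i, hi⟩) := by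
    intro t ht i hi
    have h3 : t0 + (t - t0) = t := by omega
    have h4 : Ty ≤ t - t0 := by omega
    have := h1 (t - t0) h4 (e ⟨i, hi⟩)
    rw [hy] at this
    simp only at this
    rw [hge i hi, h3] at this
    exact this
  refine ⟨t0 + Ty, Nat.le_add_right _ _, ?_, ?_⟩
  · intro t ht i hi
    rw [hval t ht i hi, hval (t0 + Ty) le_rfl i hi]
  · intro i hi j hj
    rw [hval (t0 + Ty) le_rfl i hi, hval (t0 + Ty) le_rfl j hj]
    exact h2 _ _

lemma consensus {ε : ℝ} (hε : 0 ≤ ε) (x : ℕ → Fin n → ℝ)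
    (hupd : ∀ t i, x (t + 1) i =
      (∑ j ∈ hkNbr ε (x t) i, x t j) / ((hkNbr ε (x t) i).card : ℝ))
    (t0 : ℕ) (hdiam : ∀ i j, |x t0 i - x t0 j| ≤ ε) :
    ∃ (T : ℕ) (xs : Fin n → ℝ), (∀ t, T ≤ t → ∀ i, x t i = xs i) ∧
      (∀ i j : Fin n, xs i = xs j ∨ ε < |xs i - xs j|) := by
  set c : ℝ := (∑ j, x t0 j) / (n : ℝ) with hc
  refine ⟨t0 + 1, fun _ => c, ?_, fun i j => Or.inl rfl⟩
  have hstep : ∀ s, ∀ i, x (t0 + 1 + s) i = c := by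
    intro s
    induction s with
    | zero =>
      intro i
      have hnbr : hkNbr ε (x t0) i = Finset.univ := by
        ext j; simp [mem_hkNbr, hdiam j i]
      have : x (t0 + 1) i = (∑ j ∈ hkNbr ε (x t0) i, x t0 j) / ((hkNbr ε (x t0) i).card : ℝ) :=
        hupd t0 i
      rw [hnbr] at this
      simpa [Finset.card_univ, hc] using this
    | succ s ih =>
      intro i
      have hnbr : hkNbr ε (x (t0 + 1 + s)) i = Finset.univ := by
        ext j; simp [mem_hkNbr, ih j, ih i, hε]
      have h5 : x (t0 + 1 + s + 1) i
          = (∑ j ∈ hkNbr ε (x (t0 + 1 + s)) i, x (t0 + 1 + s) j)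
            / ((hkNbr ε (x (t0 + 1 + s)) i).card : ℝ) := hupd (t0 + 1 + s) i
      rw [hnbr] at h5
      have h6 : ∑ j : Fin n, x (t0 + 1 + s) j = (n : ℝ) * c := by
        rw [Finset.sum_congr rfl (fun j _ => ih j)]
        simp [Finset.card_univ, mul_comm]
      have hn : (0:ℝ) < n := by
        have : 0 < n := Fin.pos i
        exact_mod_cast this
      rw [h6, Finset.card_univ, Fintype.card_fin] at h5
      rw [show t0 + 1 + (s + 1) = t0 + 1 + s + 1 by ring, h5]
      field_simp
  intro t ht i
  have : t = t0 + 1 + (t - (t0 + 1)) := by omega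
  rw [this]
  exact hstep _ i
theorem hk_main (ε : ℝ) (hε : 0 < ε) :
    ∀ n (x : ℕ → Fin n → ℝ),
      (∀ t i, x (t + 1) i =
        (∑ j ∈ hkNbr ε (x t) i, x t j) / ((hkNbr ε (x t) i).card : ℝ)) →
      ∃ (T : ℕ) (xs : Fin n → ℝ),
        (∀ t, T ≤ t → ∀ i, x t i = xs i) ∧
        (∀ i j, xs i = xs j ∨ ε < |xs i - xs j|) := by
  intro n
  induction n using Nat.strong_induction_on with
  | _ n IH =>
  intro x hupd
  rcases Nat.eq_zero_or_pos n with hn0 | hn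
  · subst hn0
    exact ⟨0, (fun i => i.elim0), fun t _ i => i.elim0, fun i => i.elim0⟩
  have hne : (Finset.univ : Finset (Fin n)).Nonempty := ⟨⟨0, hn⟩, Finset.mem_univ _⟩
  by_cases hcase : ∃ t0, ∀ i j, |x t0 i - x t0 j| ≤ ε
  · obtain ⟨t0, hdiam⟩ := hcase
    exact consensus hε.le x hupd t0 hdiam
  push_neg at hcase
  -- basic facts about min/max
  have hnR : (0:ℝ) < (n:ℝ) := by exact_mod_cast hn
  have hn1 : (1:ℝ) ≤ (n:ℝ) := by exact_mod_cast hn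
  set m : ℕ → ℝ := fun t => Finset.univ.inf' hne (x t) with hm
  set M : ℕ → ℝ := fun t => Finset.univ.sup' hne (x t) with hM
  have hmle : ∀ t i, m t ≤ x t i := fun t i => Finset.inf'_le _ (Finset.mem_univ i)
  have hMge : ∀ t i, x t i ≤ M t := fun t i => Finset.le_sup' _ (Finset.mem_univ i)
  have hnbr_ne : ∀ t (i : Fin n), (hkNbr ε (x t) i).Nonempty :=
    fun t i => ⟨i, self_mem_hkNbr hε.le _ i⟩
  have hstep_ge : ∀ t i, m t ≤ x (t+1) i := by
    intro t i; rw [hupd t i]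
    exact avg_ge (hnbr_ne t i) (fun j _ => hmle t j)
  have hstep_le : ∀ t i, x (t+1) i ≤ M t := by
    intro t i; rw [hupd t i]
    exact avg_le (hnbr_ne t i) (fun j _ => hMge t j)
  have hmmono : Monotone m :=
    monotone_nat_of_le_succ (fun t => Finset.le_inf' hne _ (fun i _ => hstep_ge t i))
  have hManti : Antitone M :=
    antitone_nat_of_succ_le (fun t => Finset.sup'_le hne _ (fun i _ => hstep_le t i))
  have hmleM : ∀ t, m t ≤ M t := fun t => le_trans (hmle t ⟨0, hn⟩) (hMge t ⟨0, hn⟩)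
  have hbdd : BddAbove (Set.range m) := by
    refine ⟨M 0, ?_⟩
    rintro y ⟨t, rfl⟩
    exact le_trans (hmleM t) (hManti (Nat.zero_le t))
  set ms : ℝ := ⨆ t, m t with hms
  have hms_ge : ∀ t, m t ≤ ms := fun t => le_ciSup hbdd t
  have hms_tail : ∀ δ : ℝ, 0 < δ → ∃ T, ∀ t, T ≤ t → ms - δ < m t := by
    intro δ hδ
    have h1 : ms - δ < ⨆ t, m t := by rw [← hms]; linarith
    obtain ⟨T, hT⟩ := exists_lt_of_lt_ciSup h1
    exact ⟨T, fun t ht => lt_of_lt_of_le hT (hmmono ht)⟩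
  have hbump : ∀ t (w : ℝ), m t ≤ w →
      (∀ i, ∃ j ∈ hkNbr ε (x t) i, w ≤ x t j) →
      ∀ i, m t + (w - m t) / (n:ℝ) ≤ x (t+1) i := by
    intro t w hw hAll i
    obtain ⟨j0, hj0, hwj⟩ := hAll i
    rw [hupd t i]
    exact avg_bump (fun j hj => hmle t j) (hkNbr_card_le ε (x t) i) hw hj0 hwj
  -- the constant η
  set η : ℝ := ε / (8 * ((n:ℝ) + 1)) with hηdef
  have hη0 : 0 < η := by rw [hηdef]; positivity
  have h5η : 5 * η ≤ ε := by
    rw [hηdef]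
    rw [show 5 * (ε / (8 * ((n:ℝ) + 1))) = 5 * ε / (8 * ((n:ℝ) + 1)) by ring]
    rw [div_le_iff₀ (by positivity)]
    nlinarith [hε.le, hnR]
  have hkeyη : η * (2 * (n:ℝ) + 3) ≤ ε := by
    rw [hηdef]
    rw [show ε / (8 * ((n:ℝ) + 1)) * (2 * (n:ℝ) + 3) = ε * (2 * (n:ℝ) + 3) / (8 * ((n:ℝ) + 1)) by ring]
    rw [div_le_iff₀ (by positivity)]
    nlinarith [hε.le, hnR]
  obtain ⟨T1, hT1⟩ := disp_tendsto_zero hε.le x hupd hη0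
  obtain ⟨T2, hT2⟩ := hms_tail (η / (n:ℝ)) (by positivity)
  set T3 : ℕ := max T1 T2 with hT3
  have hT3t1 : ∀ t, T3 ≤ t → T1 ≤ t := fun t ht => le_trans (le_max_left _ _) ht
  have hT3t2 : ∀ t, T3 ≤ t → T2 ≤ t := fun t ht => le_trans (le_max_right _ _) ht
  -- Claim 1 : no agent in the middle zone
  have claim1 : ∀ t, T3 ≤ t → ∀ j, x t j < ms + 2*η ∨ ms + ε - 2*η < x t j := by
    intro t ht j
    by_contra hcon
    push_neg at hcon
    obtain ⟨hj1, hj2⟩ := hcon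
    -- every agent has a neighbor with value ≥ ms + 2η
    have hAll : ∀ i, ∃ k ∈ hkNbr ε (x t) i, ms + 2*η ≤ x t k := by
      intro i
      by_cases hi : ms + 2*η ≤ x t i
      · exact ⟨i, self_mem_hkNbr hε.le _ i, hi⟩
      · push_neg at hi
        refine ⟨j, mem_hkNbr.mpr ?_, hj1⟩
        have hmt : ms - η / (n:ℝ) < m t := hT2 t (hT3t2 t ht)
        have hηn : η / (n:ℝ) ≤ η := by
          rw [div_le_iff₀ hnR]; nlinarith [hη0.le]
        rw [abs_le]
        constructor
        · have := hmle t j; nlinarith [hms_ge t]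
        · have h1 : x t j - x t i ≤ (ms + ε - 2*η) - m t := by
            have := hmle t i; linarith
          linarith
    have hb := hbump t (ms + 2*η) (by nlinarith [hms_ge t]) hAll
    have hmt1 : m (t+1) ≤ ms := hms_ge (t+1)
    have hmt1' : m t + (ms + 2*η - m t) / (n:ℝ) ≤ m (t+1) :=
      Finset.le_inf' hne _ (fun i _ => hb i)
    have k1 : (ms + 2*η - m t) / (n:ℝ) ≤ ms - m t := by linarith
    rw [div_le_iff₀ hnR] at k1
    have hmt : ms - η / (n:ℝ) < m t := hT2 t (hT3t2 t ht)
    have k2 : (ms - m t) * (n:ℝ) < η := by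
      have h3 : ms - m t < η / (n:ℝ) := by linarith
      rw [lt_div_iff₀ hnR] at h3
      exact h3
    nlinarith [hms_ge t, hη0]
  -- the bottom cluster
  set S : Finset (Fin n) := Finset.univ.filter (fun i => x T3 i < ms + 2*η) with hS
  have Bt : ∀ t, T3 ≤ t → ∀ i, (i ∈ S ↔ x t i < ms + 2*η) := by
    intro t ht
    induction t, ht using Nat.le_induction with
    | base => intro i; simp [hS]
    | succ t ht ih =>
      intro i
      have hd := hT1 t (hT3t1 t ht) i
      rw [abs_le] at hd
      constructor
      · intro hiS
        have h1 : x t i < ms + 2*η := (ih i).mp hiS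
        have h2 : x (t+1) i ≤ ms + 3*η := by linarith [hd.2]
        rcases claim1 (t+1) (le_trans ht (Nat.le_succ t)) i with h | h
        · exact h
        · exfalso; linarith
      · intro h1
        by_contra hiS
        have h2 : ¬ (x t i < ms + 2*η) := fun h => hiS ((ih i).mpr h)
        push_neg at h2
        rcases claim1 t ht i with h | h
        · exfalso; linarith
        · have : ms + ε - 3*η ≤ x (t+1) i := by linarith [hd.1]
          linarith
  -- S is nonempty
  have hSne : ∃ i, i ∈ S := by
    obtain ⟨i, _, hieq⟩ := Finset.exists_mem_eq_inf' hne (x T3)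
    refine ⟨i, (Bt T3 le_rfl i).mpr ?_⟩
    have : m T3 = x T3 i := hieq
    rw [← this]
    have := hms_ge T3
    linarith
  -- S is proper
  have hSproper : ∃ j, j ∉ S := by
    obtain ⟨i, j, hij⟩ := hcase T3
    by_contra hcon
    push_neg at hcon
    have hi := (Bt T3 le_rfl i).mp (hcon i)
    have hj := (Bt T3 le_rfl j).mp (hcon j)
    have hmt : ms - η / (n:ℝ) < m T3 := hT2 T3 (hT3t2 T3 le_rfl)
    have hηn : η / (n:ℝ) ≤ η := by rw [div_le_iff₀ hnR]; nlinarith [hη0.le]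
    have h1 := hmle T3 i
    have h2 := hmle T3 j
    have := hms_ge T3
    have hb : |x T3 i - x T3 j| < 3*η := by
      rw [abs_lt]; constructor <;> nlinarith
    linarith [hij, hb, h5η, hη0]
  -- closure of S
  have hcl : ∀ t, T3 ≤ t → ∀ i ∈ S, hkNbr ε (x t) i ⊆ S := by
    intro t ht i hiS
    intro j hj
    by_contra hjS
    have hxj : ms + ε - 2*η < x t j := by
      rcases claim1 t ht j with h | h
      · exact absurd ((Bt t ht j).mpr h) hjS
      · exact h
    have hmt : ms - η / (n:ℝ) < m t := hT2 t (hT3t2 t ht)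
    have hw : m t ≤ ms + ε - 2*η := by nlinarith [hms_ge t, h5η, hη0]
    have hb : m t + ((ms + ε - 2*η) - m t) / (n:ℝ) ≤ x (t+1) i := by
      rw [hupd t i]
      exact avg_bump (fun k hk => hmle t k) (hkNbr_card_le ε (x t) i) hw hj hxj.le
    have hlow : ms + 2*η ≤ x (t+1) i := by
      have k2 : (ms - m t) * (n:ℝ) < η := by
        have h3 : ms - m t < η / (n:ℝ) := by linarith
        rw [lt_div_iff₀ hnR] at h3; exact h3
      have k3 : ms + 2*η - m t ≤ ((ms + ε - 2*η) - m t) / (n:ℝ) := by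
        rw [le_div_iff₀ hnR]
        nlinarith [hms_ge t, hkeyη, hη0]
      linarith
    have := (Bt (t+1) (le_trans ht (Nat.le_succ t)) i).mp hiS
    linarith
  -- closure of Sᶜ
  have hclC : ∀ t, T3 ≤ t → ∀ i ∈ Sᶜ, hkNbr ε (x t) i ⊆ Sᶜ := by
    intro t ht i hiC j hj
    rw [Finset.mem_compl] at hiC ⊢
    intro hjS
    exact hiC (hcl t ht j hjS (hkNbr_symm hj))
  -- cardinalities
  obtain ⟨i0, hi0⟩ := hSne
  obtain ⟨j0, hj0⟩ := hSproper
  have hScard : S.card < n := by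
    have h1 : S ⊂ Finset.univ := Finset.ssubset_univ_iff.mpr (fun h => hj0 (h ▸ Finset.mem_univ j0))
    have := Finset.card_lt_card h1
    simpa using this
  have hCcard : Sᶜ.card < n := by
    have h1 : Sᶜ ⊂ Finset.univ :=
      Finset.ssubset_univ_iff.mpr (fun h => (Finset.mem_compl.mp (h ▸ Finset.mem_univ i0)) hi0)
    have := Finset.card_lt_card h1
    simpa using this
  -- apply the subsystem lemma to S and Sᶜ
  obtain ⟨TS, hTS3, hTSfix, hTSpair⟩ :=
    subsystem x hupd S T3 hcl (fun y hy => IH S.card hScard y hy)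
  obtain ⟨TC, hTC3, hTCfix, hTCpair⟩ :=
    subsystem x hupd Sᶜ T3 hclC (fun y hy => IH Sᶜ.card hCcard y hy)
  set Tm : ℕ := max TS TC with hTm
  have hTmS : TS ≤ Tm := le_max_left _ _
  have hTmC : TC ≤ Tm := le_max_right _ _
  have hTm3 : T3 ≤ Tm := le_trans hTS3 hTmS
  have hfix : ∀ t, Tm ≤ t → ∀ i, x t i = x Tm i := by
    intro t ht i
    by_cases hiS : i ∈ S
    · rw [hTSfix t (le_trans hTmS ht) i hiS, hTSfix Tm hTmS i hiS]
    · have hiC : i ∈ Sᶜ := Finset.mem_compl.mpr hiS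
      rw [hTCfix t (le_trans hTmC ht) i hiC, hTCfix Tm hTmC i hiC]
  refine ⟨Tm, x Tm, hfix, ?_⟩
  intro i j
  by_cases hiS : i ∈ S <;> by_cases hjS : j ∈ S
  · have hi := hTSfix Tm hTmS i hiS
    have hj := hTSfix Tm hTmS j hjS
    rw [hi, hj]
    exact hTSpair i hiS j hjS
  · -- i ∈ S, j ∉ S
    right
    by_contra hle
    push_neg at hle
    have : j ∈ hkNbr ε (x Tm) i := mem_hkNbr.mpr (by rwa [abs_sub_comm])
    exact hjS (hcl Tm hTm3 i hiS this)
  · -- i ∉ S, j ∈ S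
    right
    by_contra hle
    push_neg at hle
    have : i ∈ hkNbr ε (x Tm) j := mem_hkNbr.mpr hle
    exact hiS (hcl Tm hTm3 j hjS this)
  · have hiC : i ∈ Sᶜ := Finset.mem_compl.mpr hiS
    have hjC : j ∈ Sᶜ := Finset.mem_compl.mpr hjS
    rw [hTCfix Tm hTmC i hiC, hTCfix Tm hTmC j hjC]
    exact hTCpair i hiC j hjC

end HKaux

/-- Noise-free HK model: every trajectory reaches a static state in finite time, and the
limit opinions are pairwise either equal or separated by more than `ε`. -/
theorem hk_noise_free_finite_convergence (n : ℕ) (ε : ℝ) (hε : 0 < ε)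
    (x : ℕ → Fin n → ℝ)
    (hupd : ∀ t i, x (t + 1) i =
      (∑ j ∈ hkNbr ε (x t) i, x t j) / ((hkNbr ε (x t) i).card : ℝ)) :
    ∃ (T : ℕ) (xs : Fin n → ℝ),
      (∀ t, T ≤ t → ∀ i, x t i = xs i) ∧
      (∀ i j, xs i = xs j ∨ ε < |xs i - xs j|) := by
  exact HKaux.hk_main ε hε n x hupd
end

section
/- Suppose 0 < δ2 ≤ ε, and let T be a random time (a measurable map from the probability space to ℕ ∪ {∞}) such that d_V(T) ≤ ε on the event {T < ∞}. Then almost surely on {T < ∞}, limsup_{t→∞} d_V(t) ≤ δ2. -/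
open MeasureTheory ProbabilityTheory Filter

/-- Noisy HK update: agent `1` (index `0`) additionally receives the noise `ξ`. -/
noncomputable def hkStep {n : ℕ} (ε : ℝ) (x : Fin n → ℝ) (ξ : ℝ) (i : Fin n) : ℝ :=
  (∑ j ∈ hkNbr ε x i, x j) / ((hkNbr ε x i).card : ℝ) + (if (i : ℕ) = 0 then ξ else 0)

lemma hkStep_diff {n : ℕ} (ε : ℝ) (x : Fin n → ℝ) (ξ : ℝ)
    (h : ∀ i j, |x i - x j| ≤ ε) (i j : Fin n) :
    |hkStep ε x ξ i - hkStep ε x ξ j| ≤ |ξ| := by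
  have hnbr : ∀ k, hkNbr ε x k = Finset.univ := by
    intro k
    ext m
    simp [hkNbr, h m k]
  simp only [hkStep, hnbr]
  by_cases hi : (i : ℕ) = 0 <;> by_cases hj : (j : ℕ) = 0 <;>
    simp [hi, hj, abs_nonneg]

/-- If `0 < δ2 ≤ ε` and `T` is a random time with `d_V(T) ≤ ε` on `{T < ∞}`, then
almost surely on `{T < ∞}` we have `limsup_t d_V(t) ≤ δ2`. -/
theorem hk_phi_consensus_persists
    {Ω : Type*} [MeasurableSpace Ω] (P : Measure Ω) [IsProbabilityMeasure P]
    (n : ℕ) (hn : 2 ≤ n) (ε δ1 δ2 : ℝ) (hε : 0 < ε)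
    (hδ1 : 0 ≤ δ1) (hδ12 : δ1 ≤ δ2) (hδ2pos : 0 < δ2) (hδ2ε : δ2 ≤ ε)
    -- noise: `ξ t` is the noise injected at the update from time `t` to `t+1`
    (ξ : ℕ → Ω → ℝ) (hξmeas : ∀ t, Measurable (ξ t))
    (hindep : iIndepFun ξ P)
    (hunif : ∀ t, Measure.map (ξ t) P
      = (ENNReal.ofReal (δ1 + δ2))⁻¹ • volume.restrict (Set.Icc (-δ1) δ2))
    -- trajectory
    (x0 : Fin n → ℝ) (x : Ω → ℕ → Fin n → ℝ)
    (hx0 : ∀ ω, x ω 0 = x0)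
    (hupd : ∀ ω t i, x ω (t + 1) i = hkStep ε (x ω t) (ξ t ω) i)
    -- opinion diameter
    (d : Ω → ℕ → ℝ)
    (hd : ∀ ω t, d ω t = ⨆ i, ⨆ j, |x ω t i - x ω t j|)
    -- random time
    (T : Ω → ℕ∞) (hTmeas : Measurable T)
    (hT : ∀ ω, T ω ≠ ⊤ → d ω (T ω).toNat ≤ ε) :
    ∀ᵐ ω ∂P, T ω ≠ ⊤ → limsup (fun t => d ω t) atTop ≤ δ2 := by
  haveI : NeZero n := ⟨by omega⟩
  -- almost surely all noises lie in [-δ1, δ2]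
  have hae : ∀ᵐ ω ∂P, ∀ t, ξ t ω ∈ Set.Icc (-δ1) δ2 := by
    rw [ae_all_iff]
    intro t
    have hmeas : MeasurableSet (Set.Icc (-δ1 : ℝ) δ2)ᶜ :=
      measurableSet_Icc.compl
    have : P {ω | ξ t ω ∉ Set.Icc (-δ1) δ2} = 0 := by
      have : P {ω | ξ t ω ∉ Set.Icc (-δ1) δ2}
          = (Measure.map (ξ t) P) (Set.Icc (-δ1 : ℝ) δ2)ᶜ := by
        rw [Measure.map_apply (hξmeas t) hmeas]
        rfl
      rw [this, hunif t, Measure.smul_apply,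
        Measure.restrict_apply hmeas]
      simp
    exact this
  filter_upwards [hae] with ω hξω hTω
  -- key deterministic step
  have hd_le : ∀ t c, (∀ i j, |x ω t i - x ω t j| ≤ c) → d ω t ≤ c := by
    intro t c h
    rw [hd]
    exact ciSup_le fun i => ciSup_le fun j => h i j
  have hd_ge : ∀ t c, d ω t ≤ c → ∀ i j, |x ω t i - x ω t j| ≤ c := by
    intro t c h i j
    have h' : (⨆ i, ⨆ j, |x ω t i - x ω t j|) ≤ c := (hd ω t) ▸ h
    calc |x ω t i - x ω t j| ≤ ⨆ j, |x ω t i - x ω t j| :=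
          le_ciSup (f := fun j => |x ω t i - x ω t j|) (Finite.bddAbove_range _) j
      _ ≤ ⨆ i, ⨆ j, |x ω t i - x ω t j| :=
          le_ciSup (f := fun i => ⨆ j, |x ω t i - x ω t j|) (Finite.bddAbove_range _) i
      _ ≤ c := h'
  have key : ∀ t, d ω t ≤ ε → d ω (t + 1) ≤ δ2 := by
    intro t ht
    refine hd_le (t + 1) δ2 fun i j => ?_
    rw [hupd ω t i, hupd ω t j]
    refine le_trans (hkStep_diff ε (x ω t) (ξ t ω) (hd_ge t ε ht) i j) ?_
    have := hξω t
    rw [abs_le]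
    constructor
    · linarith [this.1]
    · exact this.2
  set t0 := (T ω).toNat with ht0
  have hbase : d ω t0 ≤ ε := hT ω hTω
  have htail : ∀ k, d ω (t0 + 1 + k) ≤ δ2 := by
    intro k
    induction k with
    | zero => exact key t0 hbase
    | succ m ih => exact key (t0 + 1 + m) (le_trans ih hδ2ε)
  have hev : ∀ᶠ t in atTop, d ω t ≤ δ2 := by
    filter_upwards [eventually_ge_atTop (t0 + 1)] with t ht
    obtain ⟨k, rfl⟩ := Nat.exists_eq_add_of_le ht
    exact htail k
  have hd0 : ∀ t, (0:ℝ) ≤ d ω t := by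
    intro t
    have i0 : Fin n := ⟨0, by omega⟩
    calc (0:ℝ) = |x ω t i0 - x ω t i0| := by simp
      _ ≤ ⨆ j, |x ω t i0 - x ω t j| :=
          le_ciSup (f := fun j => |x ω t i0 - x ω t j|) (Finite.bddAbove_range _) i0
      _ ≤ ⨆ i, ⨆ j, |x ω t i - x ω t j| :=
          le_ciSup (f := fun i => ⨆ j, |x ω t i - x ω t j|) (Finite.bddAbove_range _) i0
      _ = d ω t := (hd ω t).symm
  exact limsup_le_of_le (Filter.isCoboundedUnder_le_of_le atTop hd0) hev
end

section
/- Under the divisive initial condition with ε > 0 and 0 < δ2 ≤ ε/(2n), define the stopping time T = inf{ t : d_V(t) ≤ ε }. If the noise is neutral, i.e., δ1 = δ2, then E[T] = ∞. -/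
open MeasureTheory ProbabilityTheory Filter ENNReal

section Helpers

open ENNReal

lemma iInf_mem_nat_eq (p : ℕ → Prop) [DecidablePred p] :
    (⨅ t ∈ {s : ℕ | p s}, (t : ℝ≥0∞)) = ⨅ t : ℕ, (if p t then (t : ℝ≥0∞) else ⊤) := by
  congr 1; ext t; by_cases h : p t <;> simp [h]

lemma iInf_set_nat_nonempty {S : Set ℕ} (hS : S.Nonempty) :
    (⨅ v ∈ S, (v : ℝ≥0∞)) = ((sInf S : ℕ) : ℝ≥0∞) := by
  apply le_antisymm
  · exact iInf₂_le _ (Nat.sInf_mem hS)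
  · exact le_iInf₂ fun v hv => Nat.cast_le.mpr (Nat.sInf_le hv)

lemma iInf_set_nat_empty {S : Set ℕ} (hS : ¬ S.Nonempty) :
    (⨅ v ∈ S, (v : ℝ≥0∞)) = ⊤ := by
  rw [Set.not_nonempty_iff_eq_empty] at hS
  simp [hS]

open MeasureTheory intervalIntegral in
lemma integral_Icc_id_zero {a : ℝ} (ha : 0 ≤ a) : ∫ y in Set.Icc (-a) a, y = 0 := by
  rw [MeasureTheory.integral_Icc_eq_integral_Ioc,
    ← intervalIntegral.integral_of_le (by linarith : -a ≤ a), integral_id]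
  have hsq : (-a)^2 = a^2 := by ring
  rw [hsq]; ring

end Helpers

lemma hkDet {n Nc : ℕ} {ε δ2 : ℝ} (hδ2pos : 0 < δ2) (hδ2ε : δ2 ≤ ε)
    {Vg : Fin Nc → Finset (Fin n)}
    (hVne : ∀ g, (Vg g).Nonempty)
    (hVdisj : ∀ g h : Fin Nc, g ≠ h → Disjoint (Vg g) (Vg h))
    (hVcover : ∀ j : Fin n, ∃ g, j ∈ Vg g)
    {xs : Fin Nc → ℝ}
    (hgap : ∀ q p : Fin Nc, q < p → ε < xs p - xs q)
    {g0 g1 : Fin Nc} (hg0 : (g0 : ℕ) = 0) (hg1 : (g1 : ℕ) = 1)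
    {a0 : Fin n} (ha0 : (a0 : ℕ) = 0) (hagent : a0 ∈ Vg g0)
    (η : ℕ → ℝ) (hη : ∀ t, |η t| ≤ δ2)
    (x : ℕ → Fin n → ℝ)
    (hx0 : ∀ g : Fin Nc, ∀ i ∈ Vg g, x 0 i = xs g)
    (hupd : ∀ t i, x (t + 1) i = hkStep ε (x t) (η t) i)
    (t : ℕ)
    (htrig : ∀ s, 1 ≤ s → s ≤ t →
      (∑ u ∈ Finset.range (s - 1), η u) < ((Vg g0).card : ℝ) * (xs g1 - xs g0 - ε) ∧
      (∑ u ∈ Finset.range (s - 1), η u) + ((Vg g0).card : ℝ) * η (s - 1)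
        < ((Vg g0).card : ℝ) * (xs g1 - xs g0 - ε)) :
    (∀ g : Fin Nc, g ≠ g0 → ∀ i ∈ Vg g, x t i = xs g) ∧
    (∀ i ∈ Vg g0, x t i = xs g0 + (∑ u ∈ Finset.range (t - 1), η u) / ((Vg g0).card : ℝ)
        + (if i = a0 ∧ 1 ≤ t then η (t - 1) else 0)) ∧
    (∀ i ∈ Vg g0, x t i < xs g1 - ε) := by
  have hε : 0 < ε := lt_of_lt_of_le hδ2pos hδ2ε
  have hKpos : (0:ℝ) < ((Vg g0).card : ℝ) := by
    exact_mod_cast Finset.card_pos.mpr (hVne g0)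
  have hK0 : ((Vg g0).card : ℝ) ≠ 0 := ne_of_gt hKpos
  set K : ℝ := ((Vg g0).card : ℝ) with hKdef
  have hg0g1 : g0 < g1 := by rw [Fin.lt_def, hg0, hg1]; omega
  have hγpos : 0 < xs g1 - xs g0 - ε := by have := hgap g0 g1 hg0g1; linarith
  set γ : ℝ := xs g1 - xs g0 - ε with hγdef
  have hg1le : ∀ g : Fin Nc, g ≠ g0 → xs g1 ≤ xs g := by
    intro g hg
    rcases eq_or_ne g g1 with rfl | hgg1
    · exact le_rfl
    · have : g1 < g := by
        rw [Fin.lt_def, hg1]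
        have h1 : (g : ℕ) ≠ 0 := fun h => hg (Fin.ext (h.trans hg0.symm))
        have h2 : (g : ℕ) ≠ 1 := fun h => hgg1 (Fin.ext (h.trans hg1.symm))
        omega
      have := hgap g1 g this
      linarith
  have huniq : ∀ (j : Fin n) (g h : Fin Nc), j ∈ Vg g → j ∈ Vg h → g = h := by
    intro j g h hjg hjh
    by_contra hne
    exact (Finset.disjoint_left.mp (hVdisj g h hne) hjg) hjh
  induction t with
  | zero =>
      refine ⟨fun g _ i hi => hx0 g i hi, fun i hi => ?_, fun i hi => ?_⟩
      · simp [hx0 g0 i hi]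
      · rw [hx0 g0 i hi]; linarith
  | succ t ih =>
      obtain ⟨ihA, ihB, ihC⟩ := ih (fun s h1 h2 => htrig s h1 (h2.trans (Nat.le_succ t)))
      set c : ℝ := xs g0 + (∑ u ∈ Finset.range (t - 1), η u) / K with hcdef
      set e : ℝ := if 1 ≤ t then η (t - 1) else 0 with hedef
      have hpos0 : ∀ i ∈ Vg g0, x t i = c + (if i = a0 then e else 0) := by
        intro i hi
        rw [ihB i hi, hedef]
        by_cases h1 : i = a0 <;> by_cases h2 : 1 ≤ t <;> simp [h1, h2, hcdef, add_assoc]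
      have he : |e| ≤ δ2 := by
        rw [hedef]; by_cases h2 : 1 ≤ t <;> simp [h2, hη, abs_nonneg, le_of_lt hδ2pos]
      have heabs := abs_le.mp he
      have hcl : c < xs g1 - ε := by
        rcases Nat.eq_zero_or_pos t with rfl | ht
        · simp [hcdef]; linarith
        · have h := (htrig t ht (Nat.le_succ t)).1
          have : (∑ u ∈ Finset.range (t - 1), η u) / K < γ := by
            rw [div_lt_iff₀ hKpos]; linarith [h]
          rw [hcdef]; rw [hγdef] at this; linarith
      have hcel : c + e < xs g1 - ε := by
        rcases Nat.eq_zero_or_pos t with rfl | ht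
        · have he0 : e = 0 := by simp [hedef]
          rw [he0, add_zero]; exact hcl
        · have h := (htrig t ht (Nat.le_succ t)).2
          have ht1 : 1 ≤ t := ht
          have he' : e = η (t-1) := by rw [hedef, if_pos ht1]
          have : (∑ u ∈ Finset.range (t - 1), η u) / K + η (t-1) < γ := by
            rw [div_add' _ _ _ hK0, div_lt_iff₀ hKpos]
            calc ∑ u ∈ Finset.range (t - 1), η u + η (t - 1) * K
                = ∑ u ∈ Finset.range (t - 1), η u + K * η (t - 1) := by ring
              _ < K * γ := h
              _ = γ * K := by ring
          rw [hcdef, he']; rw [hγdef] at this; linarith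
      have hC' : ∀ i ∈ Vg g0, x t i < xs g1 - ε := by
        intro i hi
        rw [hpos0 i hi]
        by_cases h1 : i = a0 <;> simp [h1] <;> [exact hcel; exact hcl]
      -- neighbourhoods
      have hnbrA : ∀ g : Fin Nc, g ≠ g0 → ∀ i ∈ Vg g, hkNbr ε (x t) i = Vg g := by
        intro g hg i hi
        have hxi : x t i = xs g := ihA g hg i hi
        ext j
        simp only [hkNbr, Finset.mem_filter, Finset.mem_univ, true_and]
        constructor
        · intro habs
          obtain ⟨h, hj⟩ := hVcover j
          have habs' := abs_le.mp habs
          suffices hhg : h = g by rwa [hhg] at hj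
          by_contra hne
          rcases eq_or_ne h g0 with rfl | hne0
          · have h1 : x t j < xs g1 - ε := hC' j hj
            have h2 : xs g1 ≤ xs g := hg1le g hg
            have : x t j - x t i < -ε := by rw [hxi]; linarith
            linarith [habs'.1]
          · have hxj : x t j = xs h := ihA h hne0 j hj
            rcases lt_or_gt_of_ne hne with hlt | hgt
            · have := hgap h g hlt
              have : x t j - x t i < -ε := by rw [hxi, hxj]; linarith
              linarith [habs'.1]
            · have := hgap g h hgt
              have : ε < x t j - x t i := by rw [hxi, hxj]; linarith
              linarith [habs'.2]
        · intro hj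
          rw [ihA g hg j hj, hxi]
          simp [le_of_lt hε]
      have hnbrB : ∀ i ∈ Vg g0, hkNbr ε (x t) i = Vg g0 := by
        intro i hi
        ext j
        simp only [hkNbr, Finset.mem_filter, Finset.mem_univ, true_and]
        constructor
        · intro habs
          obtain ⟨h, hj⟩ := hVcover j
          have habs' := abs_le.mp habs
          suffices hhg : h = g0 by rwa [hhg] at hj
          by_contra hne0
          have hxj : x t j = xs h := ihA h hne0 j hj
          have h1 : x t i < xs g1 - ε := hC' i hi
          have h2 : xs g1 ≤ xs h := hg1le h hne0
          have : ε < x t j - x t i := by rw [hxj]; linarith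
          linarith [habs'.2]
        · intro hj
          rw [hpos0 i hi, hpos0 j hj]
          have hkey : (c + (if j = a0 then e else 0)) - (c + (if i = a0 then e else 0))
              = (if j = a0 then e else 0) - (if i = a0 then e else 0) := by ring
          rw [hkey]
          by_cases h1 : i = a0 <;> by_cases h2 : j = a0 <;>
            simp only [h1, h2, if_pos, if_neg, if_true, if_false, sub_self, sub_zero, zero_sub, abs_zero, abs_neg] <;>
            first
              | linarith
              | (rw [abs_le]; exact ⟨by linarith, by linarith⟩)
      -- update
      have hA' : ∀ g : Fin Nc, g ≠ g0 → ∀ i ∈ Vg g, x (t+1) i = xs g := by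
        intro g hg i hi
        have hia : ¬ ((i : ℕ) = 0) := by
          intro h
          have : i = a0 := Fin.ext (h.trans ha0.symm)
          subst this
          exact hg (huniq i g g0 hi hagent)
        rw [hupd t i]
        unfold hkStep
        rw [hnbrA g hg i hi]
        rw [Finset.sum_congr rfl (fun j hj => ihA g hg j hj), Finset.sum_const, nsmul_eq_mul]
        have hcard : ((Vg g).card : ℝ) ≠ 0 := by
          exact_mod_cast Finset.card_pos.mpr (hVne g) |>.ne'
        simp [hia, mul_div_assoc, mul_comm, mul_div_cancel_left₀ _ hcard]
        field_simp
      have hB' : ∀ i ∈ Vg g0, x (t+1) i = xs g0 + (∑ u ∈ Finset.range ((t+1) - 1), η u) / K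
          + (if i = a0 ∧ 1 ≤ t + 1 then η ((t+1) - 1) else 0) := by
        intro i hi
        rw [hupd t i]
        unfold hkStep
        rw [hnbrB i hi]
        have hsum : ∑ j ∈ Vg g0, x t j = K * c + e := by
          rw [Finset.sum_congr rfl (fun j hj => hpos0 j hj), Finset.sum_add_distrib,
            Finset.sum_const, nsmul_eq_mul, Finset.sum_ite_eq' (Vg g0) a0 (fun _ => e)]
          simp [hagent]; exact Or.inl rfl
        have hWt : ∑ u ∈ Finset.range t, η u = (∑ u ∈ Finset.range (t - 1), η u) + e := by
          rcases Nat.eq_zero_or_pos t with rfl | ht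
          · simp [hedef]
          · have ht' : t - 1 + 1 = t := Nat.succ_pred_eq_of_pos ht
            have ht1 : 1 ≤ t := ht
            have he' : e = η (t - 1) := by rw [hedef, if_pos ht1]
            rw [he']
            conv_lhs => rw [← ht']
            rw [Finset.sum_range_succ]
        have hdiv : (K * c + e) / K = xs g0 + (∑ u ∈ Finset.range t, η u) / K := by
          rw [hWt, hcdef]
          field_simp
          ring
        have hnoise : (if (i : ℕ) = 0 then η t else 0) = (if i = a0 ∧ 1 ≤ t + 1 then η ((t+1) - 1) else 0) := by
          have : ((i : ℕ) = 0) ↔ (i = a0) := by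
            constructor
            · intro h; exact Fin.ext (h.trans ha0.symm)
            · intro h; rw [h, ha0]
          simp [this, Nat.add_sub_cancel]
        rw [hsum, hdiv, hnoise]
        simp [Nat.add_sub_cancel]
      refine ⟨hA', hB', ?_⟩
      intro i hi
      rw [hB' i hi]
      have h := htrig (t+1) (Nat.le_add_left 1 t) le_rfl
      have h1 : (∑ u ∈ Finset.range t, η u) / K < γ := by
        rw [div_lt_iff₀ hKpos]
        have := h.1
        simp only [Nat.add_sub_cancel] at this
        linarith
      have h2 : (∑ u ∈ Finset.range t, η u) / K + η t < γ := by
        rw [div_add' _ _ _ hK0, div_lt_iff₀ hKpos]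
        have := h.2
        simp only [Nat.add_sub_cancel] at this
        nlinarith [this]
      by_cases hia : i = a0
      · rw [if_pos ⟨hia, by omega⟩]
        simp only [Nat.add_sub_cancel]
        rw [hγdef] at h2
        linarith
      · rw [if_neg (fun h => hia h.1), add_zero]
        simp only [Nat.add_sub_cancel]
        rw [hγdef] at h1
        linarith

set_option maxHeartbeats 2000000

/-- Under the divisive initial condition, if the noise is neutral (`δ1 = δ2`), then the
stopping time `T = inf { t : d_V(t) ≤ ε }` has infinite expectation. -/
theorem hk_neutral_noise_stopping_time_infinite
    {Ω : Type*} [MeasurableSpace Ω] (P : Measure Ω) [IsProbabilityMeasure P]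
    (n : ℕ) (hn : 2 ≤ n) (ε δ1 δ2 : ℝ) (hε : 0 < ε)
    (hδ1 : 0 ≤ δ1) (hδ12 : δ1 ≤ δ2) (hδ2pos : 0 < δ2) (hδ2 : δ2 ≤ ε / (2 * n))
    (hneutral : δ1 = δ2)
    -- noise: `ξ t` is the noise injected at the update from time `t` to `t+1`
    (ξ : ℕ → Ω → ℝ) (hξmeas : ∀ t, Measurable (ξ t))
    (hindep : iIndepFun ξ P)
    (hunif : ∀ t, Measure.map (ξ t) P
      = (ENNReal.ofReal (δ1 + δ2))⁻¹ • volume.restrict (Set.Icc (-δ1) δ2))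
    -- divisive initial condition
    (Nc : ℕ) (hNc2 : 2 ≤ Nc) (hNcn : Nc ≤ n)
    (Vg : Fin Nc → Finset (Fin n))
    (hVne : ∀ g, (Vg g).Nonempty)
    (hVdisj : ∀ g h : Fin Nc, g ≠ h → Disjoint (Vg g) (Vg h))
    (hVcover : Finset.univ.biUnion Vg = (Finset.univ : Finset (Fin n)))
    (xs : Fin Nc → ℝ)
    (hgap : ∀ q p : Fin Nc, q < p → ε < xs p - xs q)
    (hagent1 : (⟨0, by omega⟩ : Fin n) ∈ Vg ⟨0, by omega⟩)
    -- trajectory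
    (x : Ω → ℕ → Fin n → ℝ)
    (hx0 : ∀ ω, ∀ g : Fin Nc, ∀ i ∈ Vg g, x ω 0 i = xs g)
    (hupd : ∀ ω t i, x ω (t + 1) i = hkStep ε (x ω t) (ξ t ω) i)
    -- opinion diameter
    (d : Ω → ℕ → ℝ)
    (hd : ∀ ω t, d ω t = ⨆ i, ⨆ j, |x ω t i - x ω t j|) :
    ∫⁻ ω, (⨅ t ∈ {s : ℕ | d ω s ≤ ε}, (t : ℝ≥0∞)) ∂P = ⊤ := by

  classical
  have hn0 : 0 < n := by omega
  have hNc0 : 0 < Nc := by omega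
  have hNc1 : 1 < Nc := by omega
  set g0 : Fin Nc := ⟨0, hNc0⟩ with hg0def
  set g1 : Fin Nc := ⟨1, hNc1⟩ with hg1def
  set a0 : Fin n := ⟨0, hn0⟩ with ha0def
  have hagent : a0 ∈ Vg g0 := hagent1
  have hδ2ε : δ2 ≤ ε := by
    refine le_trans hδ2 (div_le_self (le_of_lt hε) ?_)
    have : (2:ℝ) ≤ (n:ℝ) := by exact_mod_cast hn
    linarith
  set k : ℕ := (Vg g0).card with hkdef
  have hk1 : 1 ≤ k := Finset.card_pos.mpr (hVne g0)
  set K : ℝ := (k : ℝ) with hKdef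
  have hK1 : (1:ℝ) ≤ K := by rw [hKdef]; exact_mod_cast hk1
  set γ : ℝ := xs g1 - xs g0 - ε with hγdef
  have hγ : 0 < γ := by
    have := hgap g0 g1 (by rw [Fin.lt_def]; norm_num)
    rw [hγdef]; linarith
  have hKγ : 0 < K * γ := mul_pos (by linarith) hγ
  -- clamped noise
  have hclampMeas : Measurable fun v : ℝ => max (-δ2) (min δ2 v) :=
    measurable_const.max (measurable_const.min measurable_id)
  set ξ' : ℕ → Ω → ℝ := fun u ω => max (-δ2) (min δ2 (ξ u ω)) with hξ'def
  have hξ'meas : ∀ u, Measurable (ξ' u) := fun u => hclampMeas.comp (hξmeas u)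
  have hξ'le : ∀ u ω, ξ' u ω ≤ δ2 := fun u ω => max_le (by linarith) (min_le_left _ _)
  have hξ'ge : ∀ u ω, -δ2 ≤ ξ' u ω := fun u ω => le_max_left _ _
  have hξ'abs : ∀ u ω, |ξ' u ω| ≤ δ2 := fun u ω => abs_le.mpr ⟨hξ'ge u ω, hξ'le u ω⟩
  have hclamp_eq : ∀ v, -δ2 ≤ v → v ≤ δ2 → max (-δ2) (min δ2 v) = v := fun v h1 h2 => by
    rw [min_eq_right h2, max_eq_right h1]
  set W : ℕ → Ω → ℝ := fun u ω => ∑ v ∈ Finset.range u, ξ' v ω with hWdef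
  have hWmeas : ∀ u, Measurable (W u) := fun u => Finset.measurable_sum _ fun v _ => hξ'meas v
  -- the noise is a.s. in [-δ2, δ2]
  have hIccP : ∀ u, P ((ξ u)⁻¹' (Set.Icc (-δ2) δ2)) = 1 := by
    intro u
    rw [← Measure.map_apply (hξmeas u) measurableSet_Icc, hunif u, hneutral,
      Measure.smul_apply, Measure.restrict_apply measurableSet_Icc, Set.inter_self,
      Real.volume_Icc, smul_eq_mul]
    have h2δ : δ2 - -δ2 = δ2 + δ2 := by ring
    rw [h2δ]
    exact ENNReal.inv_mul_cancel (by simp only [ne_eq, ENNReal.ofReal_eq_zero, not_le]; linarith)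
      ENNReal.ofReal_ne_top
  have hE0 : ∀ᵐ ω ∂P, ∀ u, ξ u ω ∈ Set.Icc (-δ2) δ2 := by
    rw [ae_all_iff]
    intro u
    have hmeas : MeasurableSet ((ξ u)⁻¹' (Set.Icc (-δ2) δ2)) := (hξmeas u) measurableSet_Icc
    rw [ae_iff]
    have heq : {ω | ¬ ξ u ω ∈ Set.Icc (-δ2) δ2} = ((ξ u)⁻¹' (Set.Icc (-δ2) δ2))ᶜ := rfl
    rw [heq, measure_compl hmeas (measure_ne_top P _), hIccP u, measure_univ]
    simp
  -- trigger time
  set trigP : Ω → ℕ → Prop := fun ω s =>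
    1 ≤ s ∧ (K*γ ≤ W (s-1) ω ∨ K*γ ≤ W (s-1) ω + K * ξ' (s-1) ω) with htrigPdef
  set τ : Ω → ℝ≥0∞ := fun ω => ⨅ s ∈ {s : ℕ | trigP ω s}, (s : ℝ≥0∞) with hτdef
  -- step 1 : τ ≤ T on the good event
  have hτT : ∀ ω, (∀ u, ξ u ω ∈ Set.Icc (-δ2) δ2) →
      τ ω ≤ ⨅ t ∈ {s : ℕ | d ω s ≤ ε}, (t : ℝ≥0∞) := by
    intro ω hω
    refine le_iInf₂ fun t ht => ?_
    simp only [Set.mem_setOf_eq] at ht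
    have hex : ∃ s, s ≤ t ∧ trigP ω s := by
      by_contra hno
      push_neg at hno
      have hη : ∀ u, |ξ u ω| ≤ δ2 := fun u => abs_le.mpr ⟨(hω u).1, (hω u).2⟩
      have hξξ' : ∀ u, ξ' u ω = ξ u ω := fun u => hclamp_eq _ (hω u).1 (hω u).2
      have hWsum : ∀ u, (∑ v ∈ Finset.range u, ξ v ω) = W u ω := fun u =>
        Finset.sum_congr rfl (fun v _ => (hξξ' v).symm)
      have hcover' : ∀ j : Fin n, ∃ g, j ∈ Vg g := fun j => by
        have : j ∈ Finset.univ.biUnion Vg := by rw [hVcover]; exact Finset.mem_univ j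
        exact Finset.mem_biUnion.mp this |>.imp fun g hg => hg.2
      have htrig' : ∀ s, 1 ≤ s → s ≤ t →
          (∑ u ∈ Finset.range (s - 1), ξ u ω) < ((Vg g0).card : ℝ) * (xs g1 - xs g0 - ε) ∧
          (∑ u ∈ Finset.range (s - 1), ξ u ω) + ((Vg g0).card : ℝ) * ξ (s-1) ω
            < ((Vg g0).card : ℝ) * (xs g1 - xs g0 - ε) := by
        intro s hs1 hst
        have hns := hno s hst
        rw [htrigPdef] at hns
        simp only [hs1, true_and, not_or, not_le] at hns
        constructor
        · rw [hWsum (s-1)]; exact hns.1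
        · have h2 := hns.2
          rw [hξξ' (s-1)] at h2
          rw [hWsum (s-1)]
          exact h2
      have hdet := hkDet hδ2pos hδ2ε hVne hVdisj hcover' hgap
        (g0 := g0) (g1 := g1) rfl rfl (a0 := a0) rfl hagent
        (fun u => ξ u ω) hη (x ω) (fun g i hi => hx0 ω g i hi) (fun u i => hupd ω u i) t htrig'
      obtain ⟨hA, hB, hC⟩ := hdet
      obtain ⟨i1, hi1⟩ := hVne g1
      have hg1ne : g1 ≠ g0 := by
        intro h
        have := congrArg Fin.val h
        simp [hg0def, hg1def] at this
      have hx1 : x ω t i1 = xs g1 := hA g1 hg1ne i1 hi1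
      have hxa : x ω t a0 < xs g1 - ε := hC a0 hagent
      have hgtε : ε < |x ω t i1 - x ω t a0| := by
        have : ε < x ω t i1 - x ω t a0 := by rw [hx1]; linarith
        exact lt_of_lt_of_le this (le_abs_self _)
      have hle1 : |x ω t i1 - x ω t a0| ≤ ⨆ j, |x ω t i1 - x ω t j| :=
        le_ciSup (f := fun j => |x ω t i1 - x ω t j|) (Set.finite_range _).bddAbove a0
      have hle2 : (⨆ j, |x ω t i1 - x ω t j|) ≤ ⨆ i, ⨆ j, |x ω t i - x ω t j| :=
        le_ciSup (Set.finite_range fun i => ⨆ j, |x ω t i - x ω t j|).bddAbove i1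
      rw [hd ω t] at ht
      linarith
    obtain ⟨s, hst, hs⟩ := hex
    calc τ ω ≤ (s : ℝ≥0∞) := iInf₂_le s hs
      _ ≤ (t : ℝ≥0∞) := Nat.cast_le.mpr hst
  -- reduction
  suffices hτtop : ∫⁻ ω, τ ω ∂P = ⊤ by
    rw [eq_top_iff, ← hτtop]
    exact lintegral_mono_ae (hE0.mono fun ω hω => hτT ω hω)
  by_contra hcon
  -- the dive event
  set m : ℕ := 2*k + 2 with hmdef
  set B2 : Set ℝ := Set.Icc (-δ2) (-(δ2/2)) with hB2def
  set D : Set Ω := ⋂ u ∈ Finset.range m, (ξ u)⁻¹' B2 with hDdef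
  have hDmeas : MeasurableSet D := by
    apply MeasurableSet.biInter (Finset.range m).countable_toSet
    exact fun u _ => (hξmeas u) measurableSet_Icc
  have hPD : 0 < P D := by
    rw [hDdef, hindep.measure_inter_preimage_eq_mul (S := Finset.range m)
      (fun i _ => measurableSet_Icc)]
    rw [pos_iff_ne_zero, Finset.prod_ne_zero_iff]
    intro u _
    rw [← Measure.map_apply (hξmeas u) measurableSet_Icc, hunif u, hneutral,
        Measure.smul_apply, Measure.restrict_apply measurableSet_Icc, smul_eq_mul]
    apply mul_ne_zero
    · exact ENNReal.inv_ne_zero.mpr ENNReal.ofReal_ne_top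
    · have hsub : B2 ∩ Set.Icc (-δ2) δ2 = B2 :=
        Set.inter_eq_self_of_subset_left (Set.Icc_subset_Icc le_rfl (by linarith))
      rw [hsub, hB2def, Real.volume_Icc]
      simp only [ne_eq, ENNReal.ofReal_eq_zero, not_le]
      linarith
  have hDbound : ∀ ω ∈ D, ∀ u, u < m → ξ u ω ∈ B2 := by
    intro ω hω u hu
    rw [hDdef] at hω
    exact Set.mem_iInter₂.mp hω u (Finset.mem_range.mpr hu)
  -- hitting time of the restarted walk
  set hitP : Ω → ℕ → Prop := fun ω v => m ≤ v ∧ K*γ ≤ W v ω - W m ω with hhitdef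
  set ρ : Ω → ℝ≥0∞ := fun ω => ⨅ v ∈ {v : ℕ | hitP ω v}, (v : ℝ≥0∞) with hρdef
  have hρmeas : Measurable ρ := by
    have heq : ρ = fun ω => ⨅ v : ℕ, (if hitP ω v then (v:ℝ≥0∞) else ⊤) := by
      funext ω; exact iInf_mem_nat_eq _
    rw [heq]
    refine Measurable.iInf fun v => Measurable.ite ?_ measurable_const measurable_const
    by_cases hmv : m ≤ v
    · have : {ω | hitP ω v} = {ω | K*γ ≤ W v ω - W m ω} := by
        ext ω; simp [hhitdef, hmv]
      rw [this]
      exact measurableSet_le measurable_const ((hWmeas v).sub (hWmeas m))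
    · have : {ω | hitP ω v} = ∅ := by
        ext ω; simp [hhitdef, hmv]
      rw [this]; exact MeasurableSet.empty
  -- on D and the good event, ρ ≤ τ
  have hρτD : ∀ ω, (∀ u, ξ u ω ∈ Set.Icc (-δ2) δ2) → ω ∈ D → ρ ω ≤ τ ω := by
    intro ω hω hωD
    rw [hτdef]
    refine le_iInf₂ fun s hs => ?_
    simp only [Set.mem_setOf_eq, htrigPdef] at hs
    obtain ⟨hs1, hs2⟩ := hs
    have hneg : ∀ u, u < m → ξ' u ω ≤ -(δ2/2) := by
      intro u hu
      have hb := hDbound ω hωD u hu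
      rw [hB2def] at hb
      have : ξ' u ω = ξ u ω := hclamp_eq _ hb.1 (le_trans hb.2 (by linarith))
      rw [this]; exact hb.2
    have hWneg : ∀ u, u ≤ m → W u ω ≤ -((u:ℝ) * (δ2/2)) := by
      intro u hu
      rw [hWdef]
      calc ∑ v ∈ Finset.range u, ξ' v ω ≤ ∑ v ∈ Finset.range u, -(δ2/2) :=
            Finset.sum_le_sum fun v hv => hneg v (lt_of_lt_of_le (Finset.mem_range.mp hv) hu)
        _ = -((u:ℝ) * (δ2/2)) := by rw [Finset.sum_const, Finset.card_range, nsmul_eq_mul]; ring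
    have hms : m ≤ s - 1 := by
      by_contra hlt
      push_neg at hlt
      have h1 : W (s-1) ω ≤ 0 := by
        have := hWneg (s-1) (le_of_lt hlt)
        have hnn : 0 ≤ ((s-1:ℕ):ℝ) * (δ2/2) := by positivity
        linarith
      rcases hs2 with h | h
      · linarith
      · have h2 : ξ' (s-1) ω ≤ -(δ2/2) := hneg _ hlt
        nlinarith
    have hW1 : K*γ - K*δ2 ≤ W (s-1) ω := by
      rcases hs2 with h | h
      · nlinarith
      · have h2 : ξ' (s-1) ω ≤ δ2 := hξ'le _ ω
        nlinarith
    have hWm : W m ω ≤ -(K+1)*δ2 := by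
      have := hWneg m le_rfl
      have hmK : ((m:ℕ):ℝ) = 2*K + 2 := by rw [hmdef]; push_cast [hKdef]; ring
      rw [hmK] at this
      linarith
    have hhit : hitP ω (s-1) := by
      rw [hhitdef]
      exact ⟨hms, by linarith⟩
    calc ρ ω ≤ ((s-1 : ℕ) : ℝ≥0∞) := iInf₂_le _ hhit
      _ ≤ (s : ℝ≥0∞) := Nat.cast_le.mpr (Nat.sub_le s 1)
  have hCfin : ∫⁻ ω in D, ρ ω ∂P ≠ ⊤ := by
    have h1 : ∫⁻ ω in D, ρ ω ∂P ≤ ∫⁻ ω in D, τ ω ∂P := by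
      apply lintegral_mono_ae
      rw [ae_restrict_iff' hDmeas]
      exact hE0.mono fun ω hω hωD => hρτD ω hω hωD
    have h2 : ∫⁻ ω in D, τ ω ∂P ≤ ∫⁻ ω, τ ω ∂P :=
      lintegral_mono' Measure.restrict_le_self le_rfl
    exact ne_top_of_le_ne_top hcon (h1.trans h2)
  have hfinD : ∀ᵐ ω ∂P, ω ∈ D → ρ ω < ⊤ := by
    rw [← ae_restrict_iff' hDmeas]
    exact ae_lt_top hρmeas hCfin
  -- the alive indicator and the stopped partial sums
  set aliveS : ℕ → Set Ω := fun u => {ω | ∀ v, m ≤ v → v ≤ u → W v ω - W m ω < K*γ}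
    with halivedef
  have haliveMeas : ∀ u, MeasurableSet (aliveS u) := by
    intro u
    have heq : aliveS u = ⋂ v ∈ Finset.Icc m u, {ω | W v ω - W m ω < K*γ} := by
      ext ω
      simp only [halivedef, Set.mem_setOf_eq, Set.mem_iInter, Finset.mem_Icc, and_imp]
    rw [heq]
    exact MeasurableSet.biInter (Finset.Icc m u).countable_toSet
      fun v _ => measurableSet_lt ((hWmeas v).sub (hWmeas m)) measurable_const
  set I : ℕ → Ω → ℝ := fun u => (aliveS u ∩ D).indicator (fun _ => (1:ℝ)) with hIdef
  have hImeas : ∀ u, Measurable (I u) := fun u =>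
    measurable_const.indicator ((haliveMeas u).inter hDmeas)
  have hIbd : ∀ u ω, 0 ≤ I u ω ∧ I u ω ≤ 1 := by
    intro u ω
    simp only [hIdef]
    by_cases h : ω ∈ aliveS u ∩ D
    · rw [Set.indicator_of_mem h]; norm_num
    · rw [Set.indicator_of_notMem h]; norm_num
  set Z : ℕ → Ω → ℝ := fun t ω => ∑ s ∈ Finset.range t, ξ' (m+s) ω * I (m+s) ω with hZdef
  have hZmeas : ∀ t, Measurable (Z t) := fun t =>
    Finset.measurable_sum _ fun s _ => (hξ'meas (m+s)).mul (hImeas (m+s))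
  -- mean zero of the clamped noise
  have hmean : ∀ u, ∫ ω, ξ' u ω ∂P = 0 := by
    intro u
    have h1 : ∫ ω, ξ' u ω ∂P = ∫ y, max (-δ2) (min δ2 y) ∂(P.map (ξ u)) :=
      (integral_map (hξmeas u).aemeasurable hclampMeas.aestronglyMeasurable).symm
    rw [h1, hunif u, hneutral, integral_smul_measure]
    have h2 : ∫ y in Set.Icc (-δ2) δ2, max (-δ2) (min δ2 y) = ∫ y in Set.Icc (-δ2) δ2, y :=
      setIntegral_congr_fun measurableSet_Icc
        (fun y hy => hclamp_eq y (Set.mem_Icc.mp hy).1 (Set.mem_Icc.mp hy).2)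
    have h3 : ∫ y in Set.Icc (-δ2) δ2, y = 0 := integral_Icc_id_zero (le_of_lt hδ2pos)
    rw [h2, h3, smul_zero]
  -- integrability
  have hξint : ∀ u, Integrable (ξ' u) P := by
    intro u
    refine (integrable_const δ2).mono' (hξ'meas u).aestronglyMeasurable ?_
    exact ae_of_all _ fun ω => by rw [Real.norm_eq_abs]; exact hξ'abs u ω
  have hIint : ∀ u, Integrable (I u) P := by
    intro u
    refine (integrable_const (1:ℝ)).mono' (hImeas u).aestronglyMeasurable ?_
    refine ae_of_all _ fun ω => ?_
    rw [Real.norm_eq_abs, abs_le]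
    exact ⟨by linarith [(hIbd u ω).1], (hIbd u ω).2⟩
  have htermInt : ∀ u, Integrable (fun ω => ξ' u ω * I u ω) P := by
    intro u
    refine (integrable_const δ2).mono' ((hξ'meas u).mul (hImeas u)).aestronglyMeasurable ?_
    refine ae_of_all _ fun ω => ?_
    rw [Real.norm_eq_abs, abs_mul]
    calc |ξ' u ω| * |I u ω| ≤ δ2 * 1 := by
          apply mul_le_mul (hξ'abs u ω) ?_ (abs_nonneg _) (le_of_lt hδ2pos)
          rw [abs_le]; exact ⟨by linarith [(hIbd u ω).1], (hIbd u ω).2⟩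
      _ = δ2 := mul_one δ2
  -- each term of Z has zero mean, by independence
  have hterm0 : ∀ s, ∫ ω, ξ' (m+s) ω * I (m+s) ω ∂P = 0 := by
    intro s
    set M1 : MeasurableSpace Ω :=
      ⨆ u ∈ {u : ℕ | u < m+s}, MeasurableSpace.comap (ξ u) inferInstance with hM1def
    have hξM1 : ∀ u, u < m+s → @Measurable Ω ℝ M1 _ (ξ u) := by
      intro u hu
      apply measurable_iff_comap_le.mpr
      rw [hM1def]
      exact le_iSup₂ (f := fun (u : ℕ) (_ : u ∈ {u : ℕ | u < m+s}) =>
        MeasurableSpace.comap (ξ u) inferInstance) u hu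
    have hξ'M1 : ∀ u, u < m+s → @Measurable Ω ℝ M1 _ (ξ' u) := fun u hu =>
      hclampMeas.comp (hξM1 u hu)
    have hWM1 : ∀ v, v ≤ m+s → @Measurable Ω ℝ M1 _ (W v) := by
      intro v hv
      exact Finset.measurable_sum _ fun u hu =>
        hξ'M1 u (lt_of_lt_of_le (Finset.mem_range.mp hu) hv)
    have haliveM1 : MeasurableSet[M1] (aliveS (m+s)) := by
      have heq : aliveS (m+s) = ⋂ v ∈ Finset.Icc m (m+s), {ω | W v ω - W m ω < K*γ} := by
        ext ω
        simp only [halivedef, Set.mem_setOf_eq, Set.mem_iInter, Finset.mem_Icc, and_imp]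
      rw [heq]
      refine MeasurableSet.biInter (Finset.Icc m (m+s)).countable_toSet fun v hv => ?_
      have hv' : v ≤ m + s := (Finset.mem_Icc.mp hv).2
      exact measurableSet_lt ((hWM1 v hv').sub (hWM1 m (Nat.le_add_right m s))) measurable_const
    have hDM1 : MeasurableSet[M1] D := by
      rw [hDdef]
      refine MeasurableSet.biInter (Finset.range m).countable_toSet fun u hu => ?_
      exact hξM1 u (lt_of_lt_of_le (Finset.mem_range.mp hu) (Nat.le_add_right m s))
        measurableSet_Icc
    have hIM1 : @Measurable Ω ℝ M1 _ (I (m+s)) :=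
      measurable_const.indicator (haliveM1.inter hDM1)
    have hIndep0 : Indep M1 (MeasurableSpace.comap (ξ (m+s)) inferInstance) P := by
      have hdisj : Disjoint {u : ℕ | u < m+s} ({m+s} : Set ℕ) := by
        rw [Set.disjoint_left]
        intro u hu hmem
        rw [Set.mem_singleton_iff] at hmem
        rw [Set.mem_setOf_eq] at hu
        omega
      have h := indep_iSup_of_disjoint (fun i => (hξmeas i).comap_le) hindep.iIndep hdisj
      simpa [hM1def] using h
    have hIndep : IndepFun (ξ' (m+s)) (I (m+s)) P := by
      rw [IndepFun_iff_Indep]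
      have hle1 : MeasurableSpace.comap (ξ' (m+s)) inferInstance
          ≤ MeasurableSpace.comap (ξ (m+s)) inferInstance := by
        apply measurable_iff_comap_le.mp
        exact hclampMeas.comp (measurable_iff_comap_le.mpr le_rfl)
      have hle2 : MeasurableSpace.comap (I (m+s)) inferInstance ≤ M1 :=
        measurable_iff_comap_le.mp hIM1
      exact indep_of_indep_of_le_left (indep_of_indep_of_le_right hIndep0.symm hle2) hle1
    have hmul : ∫ ω, ξ' (m+s) ω * I (m+s) ω ∂P
        = (∫ ω, ξ' (m+s) ω ∂P) * ∫ ω, I (m+s) ω ∂P :=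
      hIndep.integral_mul_eq_mul_integral (hξint (m+s)).aestronglyMeasurable (hIint (m+s)).aestronglyMeasurable
    rw [hmul, hmean (m+s), zero_mul]
  have hEZ : ∀ t, ∫ ω, Z t ω ∂P = 0 := by
    intro t
    simp only [hZdef]
    rw [integral_finset_sum _ (fun s _ => htermInt (m+s))]
    exact Finset.sum_eq_zero fun s _ => hterm0 s
  -- pointwise closed form of Z on D
  have hkey : ∀ ω, ω ∈ D → {v : ℕ | hitP ω v}.Nonempty → ∀ t,
      Z t ω = ∑ s ∈ Finset.range (min t (sInf {v : ℕ | hitP ω v} - m)), ξ' (m+s) ω := by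
    intro ω hωD hne
    set r : ℕ := sInf {v : ℕ | hitP ω v} with hrdef
    have hrmem : hitP ω r := Nat.sInf_mem hne
    have hrm : m ≤ r := hrmem.1
    have hIone : ∀ u, m + u < r → I (m+u) ω = 1 := by
      intro u hu
      simp only [hIdef]
      apply Set.indicator_of_mem
      refine ⟨?_, hωD⟩
      intro v hv1 hv2
      have hvr : v < r := by omega
      have hnot : ¬ hitP ω v := Nat.notMem_of_lt_sInf hvr
      simp only [hhitdef, hv1, true_and, not_le] at hnot
      exact hnot
    have hIzero : ∀ u, r ≤ m + u → I (m+u) ω = 0 := by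
      intro u hu
      simp only [hIdef]
      apply Set.indicator_of_notMem
      rintro ⟨halive, -⟩
      have h1 := halive r hrm hu
      have h2 := hrmem.2
      linarith
    intro t
    induction t with
    | zero => simp [hZdef]
    | succ t iht =>
        simp only [hZdef] at iht ⊢
        rw [Finset.sum_range_succ, iht]
        by_cases hlt : t < r - m
        · have hmt : m + t < r := by omega
          have hmin1 : min (t+1) (r-m) = min t (r-m) + 1 := by omega
          have hmin2 : min t (r-m) = t := by omega
          rw [hIone t hmt, mul_one, hmin1, Finset.sum_range_succ, hmin2]
        · have hmt : r ≤ m + t := by omega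
          have hmin1 : min (t+1) (r-m) = min t (r-m) := by omega
          rw [hIzero t hmt, mul_zero, add_zero, hmin1]
  -- the limit of Z
  set Zinf : Ω → ℝ := fun ω => if h : ω ∈ D ∧ {v : ℕ | hitP ω v}.Nonempty
      then W (sInf {v : ℕ | hitP ω v}) ω - W m ω else 0 with hZinfdef
  have hWtel : ∀ (ω : Ω) (j : ℕ), ∑ s ∈ Finset.range j, ξ' (m+s) ω = W (m+j) ω - W m ω := by
    intro ω j
    simp only [hWdef]
    rw [Finset.sum_range_add]
    ring
  have hneD : ∀ ω, ω ∈ D → ρ ω < ⊤ → {v : ℕ | hitP ω v}.Nonempty := by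
    intro ω hωD hρ
    by_contra hemp
    have : ρ ω = ⊤ := by rw [hρdef]; exact iInf_set_nat_empty hemp
    rw [this] at hρ
    exact lt_irrefl _ hρ
  have hZfix : ∀ ω, ω ∈ D → {v : ℕ | hitP ω v}.Nonempty → ∀ t,
      (sInf {v : ℕ | hitP ω v} - m) ≤ t → Z t ω = Zinf ω := by
    intro ω hωD hne t ht
    rw [hkey ω hωD hne t, min_eq_right ht, hWtel]
    have hrm : m ≤ sInf {v : ℕ | hitP ω v} := (Nat.sInf_mem hne).1
    have hmr : m + (sInf {v : ℕ | hitP ω v} - m) = sInf {v : ℕ | hitP ω v} := by omega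
    rw [hmr]
    simp only [hZinfdef]
    rw [dif_pos ⟨hωD, hne⟩]
  have hZzeroOff : ∀ ω, ω ∉ D → ∀ t, Z t ω = 0 := by
    intro ω hωD t
    simp only [hZdef]
    refine Finset.sum_eq_zero fun s _ => ?_
    simp only [hIdef]
    rw [Set.indicator_of_notMem (fun hmem => hωD hmem.2), mul_zero]
  have hZinfOff : ∀ ω, ω ∉ D → Zinf ω = 0 := by
    intro ω h
    simp only [hZinfdef]
    rw [dif_neg (fun hh => h hh.1)]
  have hZtend : ∀ᵐ ω ∂P, Tendsto (fun t => Z t ω) atTop (nhds (Zinf ω)) := by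
    filter_upwards [hfinD] with ω hfin
    by_cases hωD : ω ∈ D
    · have hne := hneD ω hωD (hfin hωD)
      have hc : Tendsto (fun _ : ℕ => Zinf ω) atTop (nhds (Zinf ω)) := tendsto_const_nhds
      refine Tendsto.congr' ?_ hc
      exact Filter.eventually_atTop.mpr
        ⟨sInf {v : ℕ | hitP ω v} - m, fun t ht => (hZfix ω hωD hne t ht).symm⟩
    · rw [hZinfOff ω hωD]
      exact Tendsto.congr (fun t => (hZzeroOff ω hωD t).symm) tendsto_const_nhds
  -- uniform dominating bound
  set gbd : Ω → ℝ := fun ω => D.indicator (fun ω' => δ2 * (ρ ω').toReal) ω with hgbddef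
  have hgbdmeas : Measurable gbd := (measurable_const.mul hρmeas.ennreal_toReal).indicator hDmeas
  have hρnat : ∀ ω, {v : ℕ | hitP ω v}.Nonempty →
      ρ ω = ((sInf {v : ℕ | hitP ω v} : ℕ) : ℝ≥0∞) := by
    intro ω hne
    rw [hρdef]
    exact iInf_set_nat_nonempty hne
  have hZbd : ∀ t, ∀ᵐ ω ∂P, ‖Z t ω‖ ≤ gbd ω := by
    intro t
    filter_upwards [hfinD] with ω hfin
    by_cases hωD : ω ∈ D
    · have hne := hneD ω hωD (hfin hωD)
      set r : ℕ := sInf {v : ℕ | hitP ω v} with hrdef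
      have hgeq : gbd ω = δ2 * (r:ℝ) := by
        simp only [hgbddef]
        rw [Set.indicator_of_mem hωD, hρnat ω hne]
        simp; exact Or.inl rfl
      rw [hkey ω hωD hne t, Real.norm_eq_abs, hgeq]
      calc |∑ s ∈ Finset.range (min t (r-m)), ξ' (m+s) ω|
          ≤ ∑ s ∈ Finset.range (min t (r-m)), |ξ' (m+s) ω| := Finset.abs_sum_le_sum_abs _ _
        _ ≤ ∑ s ∈ Finset.range (min t (r-m)), δ2 := Finset.sum_le_sum fun s _ => hξ'abs _ ω
        _ = ((min t (r-m) : ℕ) : ℝ) * δ2 := by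
            rw [Finset.sum_const, Finset.card_range, nsmul_eq_mul]
        _ ≤ (r:ℝ) * δ2 := by
            have h1 : min t (r-m) ≤ r := by omega
            have h2 : ((min t (r-m):ℕ):ℝ) ≤ (r:ℝ) := Nat.cast_le.mpr h1
            exact mul_le_mul_of_nonneg_right h2 (le_of_lt hδ2pos)
        _ = δ2 * (r:ℝ) := by ring
    · rw [hZzeroOff ω hωD t]
      simp only [hgbddef]
      rw [Set.indicator_of_notMem hωD]
      simp
  have hgint : Integrable gbd P := by
    refine ⟨hgbdmeas.aestronglyMeasurable, ?_⟩
    have hb : ∀ ω, (‖gbd ω‖₊ : ℝ≥0∞) ≤ ENNReal.ofReal δ2 * (D.indicator (fun ω' => ρ ω') ω) := by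
      intro ω
      by_cases hωD : ω ∈ D
      · simp only [hgbddef]
        rw [Set.indicator_of_mem hωD, Set.indicator_of_mem hωD]
        have h0 : 0 ≤ δ2 * (ρ ω).toReal := by positivity
        rw [← enorm_eq_nnnorm, Real.enorm_eq_ofReal h0, ENNReal.ofReal_mul (le_of_lt hδ2pos)]
        exact mul_le_mul_right ENNReal.ofReal_toReal_le _
      · simp only [hgbddef]
        rw [Set.indicator_of_notMem hωD, Set.indicator_of_notMem hωD]
        simp
    have hcalc : ∫⁻ ω, (‖gbd ω‖₊ : ℝ≥0∞) ∂P < ⊤ := by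
      calc ∫⁻ ω, (‖gbd ω‖₊ : ℝ≥0∞) ∂P
          ≤ ∫⁻ ω, ENNReal.ofReal δ2 * (D.indicator (fun ω' => ρ ω') ω) ∂P := lintegral_mono hb
        _ = ENNReal.ofReal δ2 * ∫⁻ ω, D.indicator (fun ω' => ρ ω') ω ∂P :=
            lintegral_const_mul _ (hρmeas.indicator hDmeas)
        _ = ENNReal.ofReal δ2 * ∫⁻ ω in D, ρ ω ∂P := by rw [lintegral_indicator hDmeas]
        _ < ⊤ := ENNReal.mul_lt_top ENNReal.ofReal_lt_top (lt_top_iff_ne_top.mpr hCfin)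
    exact hcalc
  -- dominated convergence
  have htendI : Tendsto (fun t => ∫ ω, Z t ω ∂P) atTop (nhds (∫ ω, Zinf ω ∂P)) :=
    tendsto_integral_of_dominated_convergence gbd (fun t => (hZmeas t).aestronglyMeasurable)
      hgint hZbd hZtend
  have hIZ : ∫ ω, Zinf ω ∂P = 0 := by
    have h0 : Tendsto (fun t => ∫ ω, Z t ω ∂P) atTop (nhds 0) := by
      simp only [hEZ]; exact tendsto_const_nhds
    exact tendsto_nhds_unique htendI h0
  have hZinfInt : Integrable Zinf P := by
    have hAES : AEStronglyMeasurable Zinf P :=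
      aestronglyMeasurable_of_tendsto_ae _ (fun t => (hZmeas t).aestronglyMeasurable) hZtend
    refine hgint.mono' hAES ?_
    have hall : ∀ᵐ ω ∂P, ∀ t, ‖Z t ω‖ ≤ gbd ω := ae_all_iff.mpr hZbd
    filter_upwards [hall, hZtend] with ω h1 h2
    exact le_of_tendsto h2.norm (Filter.Eventually.of_forall fun t => h1 t)
  have hminor : ∀ᵐ ω ∂P, D.indicator (fun _ => K*γ) ω ≤ Zinf ω := by
    filter_upwards [hfinD] with ω hfin
    by_cases hωD : ω ∈ D
    · have hne := hneD ω hωD (hfin hωD)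
      rw [Set.indicator_of_mem hωD]
      simp only [hZinfdef]
      rw [dif_pos ⟨hωD, hne⟩]
      exact (Nat.sInf_mem hne).2
    · rw [Set.indicator_of_notMem hωD, hZinfOff ω hωD]
  have hfinal : K*γ * (P D).toReal ≤ 0 := by
    have h1 : ∫ ω, D.indicator (fun _ => K*γ) ω ∂P = K*γ * (P D).toReal := by
      rw [integral_indicator hDmeas]
      simp [mul_comm]; exact Or.inl rfl
    rw [← h1, ← hIZ]
    exact integral_mono_ae ((integrable_const (K*γ)).indicator hDmeas) hZinfInt hminor
  have hpos : 0 < K*γ * (P D).toReal :=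
    mul_pos hKγ (ENNReal.toReal_pos (ne_of_gt hPD) (measure_ne_top P D))
  linarith
end

section
/- Let (X_t)_{t≥1} be i.i.d. integrable real random variables with E[X_1] = μ ≥ 0 and E[|X_1|] > 0, let S_t = X_1 + ⋯ + X_t, and for c > 0 define T_0 = inf{ t ≥ 1 : S_t ≥ 0 } and T_c = inf{ t ≥ 1 : S_t > c }. If μ = 0 then E[T_c] ≥ E[T_0] = ∞; if μ > 0 then E[T_c] < ∞. -/
open MeasureTheory ProbabilityTheory ENNReal

/-- The event that the walk with increments `X` has all its partial sums
`S_s`, `1 ≤ s ≤ n`, inside the set `C`. -/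
def rwE {Ω : Type*} (X : ℕ → Ω → ℝ) (C : Set ℝ) (n : ℕ) : Set Ω :=
  {ω | ∀ s, 1 ≤ s → s ≤ n → (∑ i ∈ Finset.range s, X i ω) ∈ C}

lemma rwE_zero {Ω : Type*} (X : ℕ → Ω → ℝ) (C : Set ℝ) : rwE X C 0 = Set.univ := by
  ext ω; simp only [rwE, Set.mem_setOf_eq, Set.mem_univ, iff_true]
  intro s hs1 hs0; omega

lemma rwE_antitone {Ω : Type*} (X : ℕ → Ω → ℝ) (C : Set ℝ) {m n : ℕ} (h : m ≤ n) :
    rwE X C n ⊆ rwE X C m := fun ω hω s hs1 hs2 => hω s hs1 (hs2.trans h)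

lemma rwE_succ_iff {Ω : Type*} (X : ℕ → Ω → ℝ) (C : Set ℝ) (n : ℕ) (ω : Ω) :
    ω ∈ rwE X C (n + 1) ↔ ω ∈ rwE X C n ∧ (∑ i ∈ Finset.range (n + 1), X i ω) ∈ C := by
  constructor
  · intro h
    exact ⟨fun s hs1 hs2 => h s hs1 (hs2.trans n.le_succ), h (n+1) (by omega) le_rfl⟩
  · rintro ⟨h1, h2⟩ s hs1 hs2
    rcases Nat.lt_or_ge s (n+1) with h | h
    · exact h1 s hs1 (by omega)
    · have : s = n + 1 := le_antisymm hs2 h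
      rwa [this]

lemma rwE_measurableSet {Ω : Type*} [MeasurableSpace Ω] {X : ℕ → Ω → ℝ}
    (hmeas : ∀ t, Measurable (X t)) {C : Set ℝ} (hC : MeasurableSet C) (n : ℕ) :
    MeasurableSet (rwE X C n) := by
  have : rwE X C n = ⋂ (s : ℕ), ⋂ (_ : 1 ≤ s), ⋂ (_ : s ≤ n),
      (fun ω => ∑ i ∈ Finset.range s, X i ω) ⁻¹' C := by
    ext ω; simp [rwE, Set.mem_iInter]
  rw [this]
  exact MeasurableSet.iInter fun s => MeasurableSet.iInter fun _ => MeasurableSet.iInter fun _ =>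
    (Finset.measurable_sum _ fun i _ => hmeas i) hC

open scoped Classical in
lemma biInf_nat_cast_eq_tsum (A : Set ℕ) :
    (⨅ t ∈ A, (t : ℝ≥0∞)) = ∑' n : ℕ, if ∀ t ∈ A, n < t then (1 : ℝ≥0∞) else 0 := by
  classical
  rcases A.eq_empty_or_nonempty with hA | hA
  · subst hA
    rw [show (⨅ t ∈ (∅ : Set ℕ), (t : ℝ≥0∞)) = ⊤ by simp]
    simp only [Set.mem_empty_iff_false, false_implies, implies_true, if_true]
    exact (tsum_const_eq_top_of_ne_zero one_ne_zero).symm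
  · set m := sInf A with hm
    have hmA : m ∈ A := Nat.sInf_mem hA
    have hL : (⨅ t ∈ A, (t : ℝ≥0∞)) = (m : ℝ≥0∞) := by
      apply le_antisymm
      · exact iInf₂_le m hmA
      · exact le_iInf₂ fun t ht => Nat.cast_le.2 (Nat.sInf_le ht)
    have hcond : ∀ n : ℕ, (∀ t ∈ A, n < t) ↔ n < m := by
      intro n
      constructor
      · intro h; exact h m hmA
      · intro h t ht; exact lt_of_lt_of_le h (Nat.sInf_le ht)
    rw [hL]
    have : ∀ n : ℕ, (if ∀ t ∈ A, n < t then (1 : ℝ≥0∞) else 0)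
        = if n < m then (1 : ℝ≥0∞) else 0 := fun n => by
      by_cases h : n < m
      · rw [if_pos ((hcond n).2 h), if_pos h]
      · rw [if_neg (fun hh => h ((hcond n).1 hh)), if_neg h]
    rw [tsum_congr this, tsum_eq_sum (s := Finset.range m)
      (fun n hn => if_neg (fun h => hn (Finset.mem_range.2 h))),
      Finset.sum_congr rfl (fun n hn => if_pos (Finset.mem_range.1 hn))]
    simp

/-- Master identity: the expected hitting time (as an `ℝ≥0∞`-valued infimum) equals the
sum of the probabilities of the "not yet escaped" events. -/
lemma lintegral_hitting {Ω : Type*} [MeasurableSpace Ω] (P : Measure Ω)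
    {X : ℕ → Ω → ℝ} (hmeas : ∀ t, Measurable (X t)) {C : Set ℝ} (hC : MeasurableSet C) :
    ∫⁻ ω, (⨅ t ∈ {t : ℕ | 1 ≤ t ∧ (∑ i ∈ Finset.range t, X i ω) ∉ C}, (t : ℝ≥0∞)) ∂P
      = ∑' n, P (rwE X C n) := by
  classical
  have key : ∀ ω, (⨅ t ∈ {t : ℕ | 1 ≤ t ∧ (∑ i ∈ Finset.range t, X i ω) ∉ C}, (t : ℝ≥0∞))
      = ∑' n : ℕ, Set.indicator (rwE X C n) (1 : Ω → ℝ≥0∞) ω := by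
    intro ω
    rw [biInf_nat_cast_eq_tsum]
    refine tsum_congr fun n => ?_
    rw [Set.indicator_apply]
    congr 1
    simp only [eq_iff_iff]
    constructor
    · intro h s hs1 hs2
      by_contra hne
      exact absurd (h s ⟨hs1, hne⟩) (by omega)
    · intro h t ht
      by_contra hn
      exact ht.2 (h t ht.1 (by omega))
  rw [lintegral_congr key,
    lintegral_tsum fun n => (measurable_one.indicator (rwE_measurableSet hmeas hC n)).aemeasurable]
  exact tsum_congr fun n => lintegral_indicator_one (rwE_measurableSet hmeas hC n)

lemma integrable_mul_indicator {Ω : Type*} [MeasurableSpace Ω] {P : Measure Ω}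
    {f : Ω → ℝ} (hfi : Integrable f P) {s : Set Ω} (hs : MeasurableSet s) :
    Integrable (fun ω => f ω * Set.indicator s (1 : Ω → ℝ) ω) P := by
  have : (fun ω => f ω * Set.indicator s (1 : Ω → ℝ) ω) = Set.indicator s f := by
    funext ω
    by_cases h : ω ∈ s
    · simp [Set.indicator_of_mem h]
    · simp [Set.indicator_of_notMem h]
  rw [this]
  exact hfi.indicator hs

lemma wald_step {Ω : Type*} [MeasurableSpace Ω] (P : Measure Ω) [IsProbabilityMeasure P]
    {X : ℕ → Ω → ℝ} (hmeas : ∀ t, Measurable (X t))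
    (hindep : iIndepFun X P)
    {C : Set ℝ} (hC : MeasurableSet C) (t : ℕ) {f : ℝ → ℝ} (hf : Measurable f)
    (hfi : Integrable (fun ω => f (X t ω)) P) :
    ∫ ω, f (X t ω) * Set.indicator (rwE X C t) (1 : Ω → ℝ) ω ∂P
      = (∫ ω, f (X t ω) ∂P) * (P (rwE X C t)).toReal := by
  classical
  have hdisj : Disjoint ({t} : Finset ℕ) (Finset.range t) := by
    simp [Finset.disjoint_left]
  have hIF := hindep.indepFun_finset {t} (Finset.range t) hdisj hmeas
  set φ : (({t} : Finset ℕ) → ℝ) → ℝ := fun v => f (v ⟨t, Finset.mem_singleton_self t⟩) with hφ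
  have hφm : Measurable φ := hf.comp (measurable_pi_apply _)
  set D : Set ({x // x ∈ Finset.range t} → ℝ) :=
    {v | ∀ s, 1 ≤ s → ∀ hs : s ≤ t,
      (∑ i ∈ (Finset.range s).attach,
        v ⟨i.1, Finset.mem_range.2 (lt_of_lt_of_le (Finset.mem_range.1 i.2) hs)⟩) ∈ C} with hD
  have hsumm : ∀ (s : ℕ) (hs : s ≤ t),
      Measurable (fun v : ({x // x ∈ Finset.range t} → ℝ) => ∑ i ∈ (Finset.range s).attach,
        v ⟨i.1, Finset.mem_range.2 (lt_of_lt_of_le (Finset.mem_range.1 i.2) hs)⟩) := by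
    intro s hs
    exact Finset.measurable_sum _ fun i _ => measurable_pi_apply _
  have hDm : MeasurableSet D := by
    have : D = ⋂ (s : ℕ), ⋂ (_ : 1 ≤ s), ⋂ (hs : s ≤ t),
        (fun v : ({x // x ∈ Finset.range t} → ℝ) => ∑ i ∈ (Finset.range s).attach,
          v ⟨i.1, Finset.mem_range.2 (lt_of_lt_of_le (Finset.mem_range.1 i.2) hs)⟩) ⁻¹' C := by
      ext v; simp [hD, Set.mem_iInter]
    rw [this]
    exact MeasurableSet.iInter fun s => MeasurableSet.iInter fun _ =>
      MeasurableSet.iInter fun hs => (hsumm s hs) hC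
  set ψ : ({x // x ∈ Finset.range t} → ℝ) → ℝ := Set.indicator D (1 : ({x // x ∈ Finset.range t} → ℝ) → ℝ) with hψ
  have hψm : Measurable ψ := measurable_one.indicator hDm
  have hmem_iff : ∀ ω : Ω, ω ∈ rwE X C t
      ↔ (fun i : {x // x ∈ Finset.range t} => X i ω) ∈ D := by
    intro ω
    constructor
    · intro h s hs1 hs
      rw [Finset.sum_attach (Finset.range s) (fun j => X j ω)]
      exact h s hs1 hs
    · intro h s hs1 hs2
      have := h s hs1 hs2
      rwa [Finset.sum_attach (Finset.range s) (fun j => X j ω)] at this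
  have heq2 : Set.indicator (rwE X C t) (1 : Ω → ℝ)
      = ψ ∘ (fun a (i : {x // x ∈ Finset.range t}) => X i a) := by
    funext ω
    by_cases h : ω ∈ rwE X C t
    · simp only [Function.comp_apply, hψ, Set.indicator_of_mem h,
        Set.indicator_of_mem ((hmem_iff ω).1 h), Pi.one_apply]
    · simp only [Function.comp_apply, hψ, Set.indicator_of_notMem h,
        Set.indicator_of_notMem (fun hh => h ((hmem_iff ω).2 hh))]
  have heq1 : (fun ω => f (X t ω)) = φ ∘ (fun a (i : {x // x ∈ ({t} : Finset ℕ)}) => X i a) := rfl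
  have hInd : IndepFun (fun ω => f (X t ω)) (Set.indicator (rwE X C t) (1 : Ω → ℝ)) P := by
    rw [heq1, heq2]
    exact hIF.comp hφm hψm
  have hIndInt : Integrable (Set.indicator (rwE X C t) (1 : Ω → ℝ)) P :=
    (integrable_const 1).indicator (rwE_measurableSet hmeas hC t)
  have hmul : (fun ω => f (X t ω) * Set.indicator (rwE X C t) (1 : Ω → ℝ) ω)
      = (fun ω => f (X t ω)) * Set.indicator (rwE X C t) (1 : Ω → ℝ) := rfl
  rw [show (∫ ω, f (X t ω) * Set.indicator (rwE X C t) (1 : Ω → ℝ) ω ∂P)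
      = ∫ ω, ((fun ω => f (X t ω)) * Set.indicator (rwE X C t) (1 : Ω → ℝ)) ω ∂P from rfl,
    hInd.integral_mul_eq_mul_integral hfi.aestronglyMeasurable hIndInt.aestronglyMeasurable]
  congr 1
  exact integral_indicator_one (rwE_measurableSet hmeas hC t)

lemma sum_mul_indicator_escape {Ω : Type*} {E : ℕ → Set Ω}
    (hmono : ∀ {a b : ℕ}, a ≤ b → E b ⊆ E a)
    (g : ℕ → ℝ) (ω : Ω) (n : ℕ) :
    ∃ k, k ≤ n ∧
      (∑ t ∈ Finset.range n, g t * Set.indicator (E t) (1 : Ω → ℝ) ω) = (∑ t ∈ Finset.range k, g t)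
      ∧ (∀ m, m < k → ω ∈ E m) ∧ (k < n → ω ∉ E k) := by
  classical
  by_cases h : ∃ m, m < n ∧ ω ∉ E m
  · set k := Nat.find h with hk
    obtain ⟨hkn, hknot⟩ := Nat.find_spec h
    have hmin : ∀ m, m < k → ω ∈ E m := by
      intro m hm
      by_contra hcon
      exact Nat.find_min h hm ⟨hm.trans hkn, hcon⟩
    refine ⟨k, hkn.le, ?_, hmin, fun _ => hknot⟩
    rw [← Finset.sum_subset (Finset.range_subset_range.2 hkn.le) ?_]
    · refine Finset.sum_congr rfl fun m hm => ?_
      rw [Set.indicator_of_mem (hmin m (Finset.mem_range.1 hm)), Pi.one_apply, mul_one]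
    · intro m hmn hmk
      have hkm : k ≤ m := by
        by_contra hcon; exact hmk (Finset.mem_range.2 (by omega))
      rw [Set.indicator_of_notMem (fun hmem => hknot (hmono hkm hmem)), mul_zero]
  · push_neg at h
    refine ⟨n, le_rfl, ?_, h, fun hlt => absurd hlt (lt_irrefl n)⟩
    refine Finset.sum_congr rfl fun m hm => ?_
    rw [Set.indicator_of_mem (h m (Finset.mem_range.1 hm)), Pi.one_apply, mul_one]

lemma tsum_rwE_lt_top {Ω : Type*} [MeasurableSpace Ω] (P : Measure Ω) [IsProbabilityMeasure P]
    {X : ℕ → Ω → ℝ} (hmeas : ∀ t, Measurable (X t))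
    (hindep : iIndepFun X P)
    (hident : ∀ t, IdentDistrib (X t) (X 0) P P)
    (hint : Integrable (X 0) P)
    {μ : ℝ} (hμ : ∫ ω, X 0 ω ∂P = μ) (hμpos : 0 < μ)
    {c : ℝ} (hc : 0 < c) :
    ∑' n, P (rwE X (Set.Iic c) n) < ⊤ := by
  classical
  -- choose a truncation level M with positive truncated mean
  have hminint : ∀ M : ℝ, Integrable (fun ω => min (X 0 ω) M) P := by
    intro M
    refine Integrable.mono' (hint.abs.add (integrable_const |M|))
      (((hmeas 0).min measurable_const).aestronglyMeasurable)
      (Filter.Eventually.of_forall fun ω => ?_)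
    have h1 : min (X 0 ω) M ≤ |X 0 ω| + |M| := by
      have := min_le_left (X 0 ω) M
      have := le_abs_self (X 0 ω)
      have := abs_nonneg M
      linarith
    have h2 : -(|X 0 ω| + |M|) ≤ min (X 0 ω) M := by
      have := neg_abs_le (X 0 ω)
      have := neg_abs_le M
      have := abs_nonneg M
      have := abs_nonneg (X 0 ω)
      rcases min_cases (X 0 ω) M with ⟨h, _⟩ | ⟨h, _⟩ <;> rw [h] <;> linarith
    rw [Real.norm_eq_abs, abs_le]
    exact ⟨h2, h1⟩
  have htend : Filter.Tendsto (fun k : ℕ => ∫ ω, min (X 0 ω) (k : ℝ) ∂P)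
      Filter.atTop (nhds μ) := by
    rw [← hμ]
    refine tendsto_integral_of_dominated_convergence (fun ω => |X 0 ω| + 1)
      (fun k => ((hmeas 0).min measurable_const).aestronglyMeasurable)
      (hint.abs.add (integrable_const 1))
      (fun k => Filter.Eventually.of_forall fun ω => ?_)
      (Filter.Eventually.of_forall fun ω => ?_)
    · show ‖min (X 0 ω) ((k:ℝ))‖ ≤ |X 0 ω| + 1
      rw [Real.norm_eq_abs, abs_le]
      constructor
      · have := neg_abs_le (X 0 ω)
        have hk : (0:ℝ) ≤ (k:ℝ) := Nat.cast_nonneg k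
        have := abs_nonneg (X 0 ω)
        rcases min_cases (X 0 ω) ((k:ℝ)) with ⟨h, _⟩ | ⟨h, _⟩ <;> rw [h] <;> linarith
      · have := min_le_left (X 0 ω) ((k:ℝ))
        have := le_abs_self (X 0 ω)
        linarith
    · obtain ⟨N, hN⟩ := exists_nat_ge (X 0 ω)
      refine Filter.Tendsto.congr' ?_ (tendsto_const_nhds (x := X 0 ω))
      refine Filter.eventually_atTop.2 ⟨N, fun k hk => ?_⟩
      exact (min_eq_left (hN.trans (Nat.cast_le.2 hk))).symm
  obtain ⟨K, hK⟩ := (htend.eventually (eventually_gt_nhds hμpos)).exists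
  set M : ℝ := (K : ℝ) with hMdef
  set Y : ℕ → Ω → ℝ := fun t ω => min (X t ω) M with hY
  set μ' : ℝ := ∫ ω, Y 0 ω ∂P with hμ'
  have hμ'pos : 0 < μ' := hK
  have hYmeas : ∀ t, Measurable (Y t) := fun t => (hmeas t).min measurable_const
  have hindepY : iIndepFun Y P :=
    hindep.comp (fun _ x => min x M) (fun _ => measurable_id.min measurable_const)
  have hidY : ∀ t, IdentDistrib (Y t) (Y 0) P P :=
    fun t => (hident t).comp (measurable_id.min measurable_const)
  have hYint : ∀ t, Integrable (Y t) P := fun t => (hidY t).integrable_iff.2 (hminint M)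
  have hYled : ∀ t ω, Y t ω ≤ M := fun t ω => min_le_right _ _
  set E : ℕ → Set Ω := fun n => rwE Y (Set.Iic c) n with hE
  have hEmeas : ∀ n, MeasurableSet (E n) := fun n => rwE_measurableSet hYmeas measurableSet_Iic n
  set B : ℝ := c + max M 0 with hB
  -- Wald step
  have hW : ∀ t : ℕ, ∫ ω, Y t ω * Set.indicator (E t) (1 : Ω → ℝ) ω ∂P
      = μ' * (P (E t)).toReal := by
    intro t
    have := wald_step P hYmeas hindepY (C := Set.Iic c) measurableSet_Iic t (f := fun x => x)
      measurable_id (hYint t)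
    rw [this, (hidY t).integral_eq]
  -- pointwise bound
  have hpt : ∀ (N : ℕ) (ω : Ω),
      (∑ t ∈ Finset.range N, Y t ω * Set.indicator (E t) (1 : Ω → ℝ) ω) ≤ B := by
    intro N ω
    obtain ⟨k, hkN, hsum, hmem, _⟩ := sum_mul_indicator_escape
      (E := E) (fun {a b} hab => rwE_antitone Y (Set.Iic c) hab) (fun t => Y t ω) ω N
    rw [hsum]
    rcases Nat.eq_zero_or_pos k with hk0 | hkpos
    · subst hk0
      simp only [Finset.range_zero, Finset.sum_empty]
      have : (0:ℝ) ≤ max M 0 := le_max_right _ _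
      linarith
    · obtain ⟨j, rfl⟩ : ∃ j, k = j + 1 := ⟨k - 1, by omega⟩
      rw [Finset.sum_range_succ]
      have hSj : (∑ t ∈ Finset.range j, Y t ω) ≤ c := by
        rcases Nat.eq_zero_or_pos j with hj0 | hjpos
        · subst hj0; simp only [Finset.range_zero, Finset.sum_empty]; linarith
        · exact hmem j (by omega) j hjpos le_rfl
      have : Y j ω ≤ max M 0 := (hYled j ω).trans (le_max_left _ _)
      linarith
  -- integrate
  have hmain : ∀ N : ℕ, μ' * (∑ t ∈ Finset.range N, (P (E t)).toReal) ≤ B := by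
    intro N
    have hint_t : ∀ t ∈ Finset.range N,
        Integrable (fun ω => Y t ω * Set.indicator (E t) (1 : Ω → ℝ) ω) P :=
      fun t _ => integrable_mul_indicator (hYint t) (hEmeas t)
    have h1 : ∫ ω, (∑ t ∈ Finset.range N, Y t ω * Set.indicator (E t) (1 : Ω → ℝ) ω) ∂P
        = ∑ t ∈ Finset.range N, ∫ ω, Y t ω * Set.indicator (E t) (1 : Ω → ℝ) ω ∂P := by
      rw [← integral_finset_sum _ hint_t]
    have h2 : ∫ ω, (∑ t ∈ Finset.range N, Y t ω * Set.indicator (E t) (1 : Ω → ℝ) ω) ∂P ≤ B := by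
      have := integral_mono (integrable_finset_sum _ hint_t) (integrable_const B) (hpt N)
      simpa using this
    rw [h1] at h2
    rw [Finset.mul_sum]
    calc ∑ t ∈ Finset.range N, μ' * (P (E t)).toReal
        = ∑ t ∈ Finset.range N, ∫ ω, Y t ω * Set.indicator (E t) (1 : Ω → ℝ) ω ∂P :=
          Finset.sum_congr rfl fun t _ => (hW t).symm
      _ ≤ B := h2
  have htsumE : (∑' n, P (E n)) ≤ ENNReal.ofReal (B / μ') := by
    rw [ENNReal.tsum_eq_iSup_sum' _ Finset.exists_nat_subset_range]
    refine iSup_le fun N => ?_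
    calc (∑ n ∈ Finset.range N, P (E n))
        = ENNReal.ofReal (∑ n ∈ Finset.range N, (P (E n)).toReal) := by
          rw [ENNReal.ofReal_sum_of_nonneg (fun n _ => ENNReal.toReal_nonneg)]
          exact Finset.sum_congr rfl fun n _ => (ENNReal.ofReal_toReal (measure_ne_top P _)).symm
      _ ≤ ENNReal.ofReal (B / μ') := by
          apply ENNReal.ofReal_le_ofReal
          rw [le_div_iff₀ hμ'pos, mul_comm]
          exact hmain N
  have hsub : ∀ n, rwE X (Set.Iic c) n ⊆ E n := by
    intro n ω hω s hs1 hs2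
    have h1 : (∑ i ∈ Finset.range s, Y i ω) ≤ ∑ i ∈ Finset.range s, X i ω :=
      Finset.sum_le_sum fun i _ => min_le_left _ _
    exact h1.trans (hω s hs1 hs2)
  calc (∑' n, P (rwE X (Set.Iic c) n)) ≤ ∑' n, P (E n) :=
        ENNReal.tsum_le_tsum fun n => measure_mono (hsub n)
    _ ≤ ENNReal.ofReal (B / μ') := htsumE
    _ < ⊤ := ENNReal.ofReal_lt_top

section
open MeasureTheory ProbabilityTheory ENNReal Filter

lemma tsum_rwE_eq_top {Ω : Type*} [MeasurableSpace Ω] (P : Measure Ω) [IsProbabilityMeasure P]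
    {X : ℕ → Ω → ℝ} (hmeas : ∀ t, Measurable (X t))
    (hindep : iIndepFun X P)
    (hident : ∀ t, IdentDistrib (X t) (X 0) P P)
    (hint : Integrable (X 0) P)
    (hμ : ∫ ω, X 0 ω ∂P = 0) (habs : 0 < ∫ ω, |X 0 ω| ∂P) :
    ∑' n, P (rwE X (Set.Iio 0) n) = ⊤ := by
  classical
  by_contra h
  set E : ℕ → Set Ω := fun n => rwE X (Set.Iio 0) n with hE
  have hEmeas : ∀ n, MeasurableSet (E n) := fun n => rwE_measurableSet hmeas measurableSet_Iio n
  set p : ℕ → ℝ := fun n => (P (E n)).toReal with hp_def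
  have hp : Summable p := ENNReal.summable_toReal h
  have hppos : ∀ n, 0 ≤ p n := fun n => ENNReal.toReal_nonneg
  have hXint : ∀ t, Integrable (X t) P := fun t => (hident t).integrable_iff.2 hint
  have hXzero : ∀ t, ∫ ω, X t ω ∂P = 0 := fun t => (hident t).integral_eq.trans hμ
  set η : ℝ := ∫ ω, |X 0 ω| ∂P with hη_def
  have hηnn : 0 ≤ η := le_of_lt habs
  have hXabs : ∀ t, ∫ ω, |X t ω| ∂P = η := fun t =>
    ((hident t).comp measurable_abs).integral_eq
  set δ : ℝ := ∫ ω, max (X 0 ω) 0 ∂P with hδ_def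
  have hδ : δ = η / 2 := by
    have hfe : (fun ω => max (X 0 ω) 0) = fun ω => (X 0 ω + |X 0 ω|) / 2 := by
      funext ω
      rcases abs_cases (X 0 ω) with ⟨h1, h2⟩ | ⟨h1, h2⟩
      · rw [h1, max_eq_left h2]; ring
      · rw [h1, max_eq_right h2.le]; ring
    rw [hδ_def, hfe]
    rw [integral_div, integral_add hint hint.abs, hμ, ← hη_def]
    ring
  have hδpos : 0 < δ := by rw [hδ]; linarith
  -- Wald identities
  have w0 : ∀ t : ℕ, ∫ ω, X t ω * Set.indicator (E t) (1 : Ω → ℝ) ω ∂P = 0 := by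
    intro t
    have := wald_step P hmeas hindep (C := Set.Iio 0) measurableSet_Iio t (f := fun x => x)
      measurable_id (hXint t)
    rw [this, hXzero t, zero_mul]
  have wabs : ∀ t : ℕ, ∫ ω, |X t ω| * Set.indicator (E t) (1 : Ω → ℝ) ω ∂P = η * p t := by
    intro t
    have := wald_step P hmeas hindep (C := Set.Iio 0) measurableSet_Iio t (f := fun x => |x|)
      measurable_abs (hXint t).abs
    rw [this, hXabs t]
  -- the key inequality
  have hX0neg : ∀ ω : Ω, ω ∈ E 1 → X 0 ω < 0 := by
    intro ω hω
    have := hω 1 le_rfl le_rfl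
    rwa [Finset.sum_range_one, Set.mem_Iio] at this
  have hpt : ∀ n : ℕ, 1 ≤ n → ∀ ω : Ω,
      max (X 0 ω) 0 + (∑ i ∈ Finset.range n, X i ω) * Set.indicator (E n) (1 : Ω → ℝ) ω
        ≤ ∑ t ∈ Finset.range n, X t ω * Set.indicator (E t) (1 : Ω → ℝ) ω := by
    intro n hn ω
    obtain ⟨k, hkn, hsum, hmem, hesc⟩ := sum_mul_indicator_escape
      (E := E) (fun {a b} hab => rwE_antitone X (Set.Iio 0) hab) (fun t => X t ω) ω n
    rw [hsum]
    by_cases hEn : ω ∈ E n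
    · have hkn' : k = n := by
        by_contra hne
        exact (hesc (lt_of_le_of_ne hkn hne)) (rwE_antitone X (Set.Iio 0) hkn hEn)
      subst hkn'
      rw [Set.indicator_of_mem hEn, Pi.one_apply, mul_one]
      have h1 : X 0 ω < 0 := hX0neg ω (rwE_antitone X (Set.Iio 0) hn hEn)
      rw [max_eq_right h1.le]
      linarith
    · rw [Set.indicator_of_notMem hEn, mul_zero, add_zero]
      have hnotk : ω ∉ E k := by
        rcases lt_or_eq_of_le hkn with hlt | heq
        · exact hesc hlt
        · rwa [heq]
      have hk1 : 1 ≤ k := by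
        rcases Nat.eq_zero_or_pos k with hk0 | hk1
        · exfalso; apply hnotk; rw [hk0]; show ω ∈ rwE X (Set.Iio 0) 0
          rw [rwE_zero]; trivial
        · exact hk1
      obtain ⟨j, rfl⟩ : ∃ j, k = j + 1 := ⟨k - 1, by omega⟩
      have hmemj : ω ∈ E j := hmem j (by omega)
      have hSk : 0 ≤ ∑ i ∈ Finset.range (j + 1), X i ω := by
        by_contra hneg
        push_neg at hneg
        exact hnotk ((rwE_succ_iff X (Set.Iio 0) j ω).2 ⟨hmemj, Set.mem_Iio.2 hneg⟩)
      rcases Nat.eq_zero_or_pos j with hj0 | hjpos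
      · subst hj0
        rw [Finset.sum_range_one] at hSk ⊢
        exact max_le le_rfl hSk
      · have h1 : X 0 ω < 0 := hX0neg ω (rwE_antitone X (Set.Iio 0) hjpos hmemj)
        rw [max_eq_right h1.le]
        exact hSk
  have hmaxint : Integrable (fun ω => max (X 0 ω) 0) P := hint.pos_part
  have hSind_int : ∀ n : ℕ, Integrable
      (fun ω => (∑ i ∈ Finset.range n, X i ω) * Set.indicator (E n) (1 : Ω → ℝ) ω) P :=
    fun n => integrable_mul_indicator (integrable_finset_sum _ fun i _ => hXint i) (hEmeas n)
  have hfin : ∀ n : ℕ, 1 ≤ n →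
      ∫ ω, (∑ i ∈ Finset.range n, X i ω) * Set.indicator (E n) (1 : Ω → ℝ) ω ∂P ≤ -δ := by
    intro n hn
    have hint_t : ∀ t ∈ Finset.range n,
        Integrable (fun ω => X t ω * Set.indicator (E t) (1 : Ω → ℝ) ω) P :=
      fun t _ => integrable_mul_indicator (hXint t) (hEmeas t)
    have hrhs0 : ∫ ω, (∑ t ∈ Finset.range n, X t ω * Set.indicator (E t) (1 : Ω → ℝ) ω) ∂P
        = 0 := by
      rw [integral_finset_sum _ hint_t]
      exact Finset.sum_eq_zero fun t _ => w0 t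
    have hmono : ∫ ω, (max (X 0 ω) 0
          + (∑ i ∈ Finset.range n, X i ω) * Set.indicator (E n) (1 : Ω → ℝ) ω) ∂P
        ≤ ∫ ω, (∑ t ∈ Finset.range n, X t ω * Set.indicator (E t) (1 : Ω → ℝ) ω) ∂P := by
      refine integral_mono ?_ (integrable_finset_sum _ hint_t) (hpt n hn)
      exact hmaxint.add (hSind_int n)
    rw [integral_add hmaxint (hSind_int n), hrhs0, ← hδ_def] at hmono
    linarith
  -- null intersection
  have hnull : P (⋂ n, E n) = 0 := by
    have hterm : Tendsto p atTop (nhds 0) := hp.tendsto_atTop_zero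
    have hle : ∀ n, (P (⋂ k, E k)).toReal ≤ p n := fun n =>
      ENNReal.toReal_mono (measure_ne_top P _) (measure_mono (Set.iInter_subset E n))
    have h0 : (P (⋂ k, E k)).toReal ≤ 0 := ge_of_tendsto' hterm hle
    have h0' : (P (⋂ k, E k)).toReal = 0 := le_antisymm h0 ENNReal.toReal_nonneg
    rcases (ENNReal.toReal_eq_zero_iff _).1 h0' with h | h
    · exact h
    · exact absurd h (measure_ne_top P _)
  have hae : ∀ᵐ ω ∂P, ω ∉ ⋂ n, E n := by
    rw [← MeasureTheory.measure_eq_zero_iff_ae_notMem]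
    exact hnull
  -- dominated convergence for the first `m` terms
  -- choose m for the tail
  set ε : ℝ := δ / (2 * (η + 1)) with hε_def
  have hεpos : 0 < ε := by
    apply div_pos hδpos
    nlinarith
  set L : ℝ := ∑' t, p t with hL
  have hple : ∀ N, ∑ t ∈ Finset.range N, p t ≤ L :=
    fun N => Summable.sum_le_tsum (Finset.range N) (fun t _ => hppos t) hp
  obtain ⟨m, hm⟩ : ∃ m, L - ε < ∑ t ∈ Finset.range m, p t :=
    ((hp.hasSum.tendsto_sum_nat.eventually (eventually_gt_nhds (by linarith : L - ε < L))).exists)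
  have htail : ∀ n, m ≤ n → ∑ t ∈ Finset.Ico m n, p t ≤ ε := by
    intro n hmn
    rw [Finset.sum_Ico_eq_sub _ hmn]
    have := hple n
    linarith
  set G : Ω → ℝ := fun ω => ∑ t ∈ Finset.range m, |X t ω| with hG
  have hGnn : ∀ ω, 0 ≤ G ω := fun ω => Finset.sum_nonneg fun t _ => abs_nonneg _
  have hGint : Integrable G P := integrable_finset_sum _ fun t _ => (hXint t).abs
  have hGmeas : Measurable G := Finset.measurable_sum _ fun t _ => (hmeas t).abs
  have hDCT : Tendsto (fun n => ∫ ω, G ω * Set.indicator (E n) (1 : Ω → ℝ) ω ∂P)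
      atTop (nhds 0) := by
    have h0 : (0 : ℝ) = ∫ _ω, (0 : ℝ) ∂P := by rw [integral_zero]
    rw [h0]
    refine tendsto_integral_of_dominated_convergence G
      (fun n => (hGmeas.mul (measurable_one.indicator (hEmeas n))).aestronglyMeasurable)
      hGint (fun n => Filter.Eventually.of_forall fun ω => ?_) ?_
    · show ‖G ω * Set.indicator (E n) (1 : Ω → ℝ) ω‖ ≤ G ω
      by_cases hmem : ω ∈ E n
      · rw [Set.indicator_of_mem hmem, Pi.one_apply, mul_one, Real.norm_eq_abs,
          abs_of_nonneg (hGnn ω)]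
      · rw [Set.indicator_of_notMem hmem, mul_zero, norm_zero]
        exact hGnn ω
    · filter_upwards [hae] with ω hω
      show Filter.Tendsto (fun n => G ω * Set.indicator (E n) (1 : Ω → ℝ) ω)
        atTop (nhds (0 : ℝ))
      have : ∃ n0, ω ∉ E n0 := by
        by_contra hcon
        push_neg at hcon
        exact hω (Set.mem_iInter.2 hcon)
      obtain ⟨n0, hn0⟩ := this
      refine Filter.Tendsto.congr' ?_ tendsto_const_nhds
      refine Filter.eventually_atTop.2 ⟨n0, fun n hn => ?_⟩
      have hnm : ω ∉ E n := fun hmem => hn0 (rwE_antitone X (Set.Iio 0) hn hmem)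
      show (0 : ℝ) = G ω * Set.indicator (E n) (1 : Ω → ℝ) ω
      rw [Set.indicator_of_notMem hnm, mul_zero]
  obtain ⟨n, hn_ge, hnlt⟩ : ∃ n, max m 1 ≤ n ∧
      ∫ ω, G ω * Set.indicator (E n) (1 : Ω → ℝ) ω ∂P < δ / 2 := by
    have hev := hDCT.eventually_lt_const (show (0:ℝ) < δ / 2 by linarith)
    exact ((Filter.eventually_ge_atTop (max m 1)).and hev).exists
  have hmn : m ≤ n := le_trans (le_max_left _ _) hn_ge
  have hn1 : 1 ≤ n := le_trans (le_max_right _ _) hn_ge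
  -- final contradiction
  have habs_ind_int : ∀ t k : ℕ, Integrable
      (fun ω => |X t ω| * Set.indicator (E k) (1 : Ω → ℝ) ω) P :=
    fun t k => integrable_mul_indicator (hXint t).abs (hEmeas k)
  have hneg_bound : -(∫ ω, (∑ i ∈ Finset.range n, X i ω)
        * Set.indicator (E n) (1 : Ω → ℝ) ω ∂P)
      ≤ ∑ t ∈ Finset.range n, ∫ ω, |X t ω| * Set.indicator (E n) (1 : Ω → ℝ) ω ∂P := by
    rw [← integral_neg, ← integral_finset_sum _ (fun t _ => habs_ind_int t n)]
    refine integral_mono ?_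
      (integrable_finset_sum _ fun t _ => habs_ind_int t n) (fun ω => ?_)
    · exact (hSind_int n).neg
    by_cases hmem : ω ∈ E n
    · simp only [Pi.neg_apply, Set.indicator_of_mem hmem, Pi.one_apply, mul_one]
      have h1 : ∀ i ∈ Finset.range n, -|X i ω| ≤ X i ω := fun i _ => neg_abs_le _
      have := Finset.sum_le_sum h1
      rw [Finset.sum_neg_distrib] at this
      linarith [this]
    · simp only [Pi.neg_apply, Set.indicator_of_notMem hmem, mul_zero, neg_zero,
        Finset.sum_const_zero, le_refl]
  have hsplit : ∑ t ∈ Finset.range n, ∫ ω, |X t ω| * Set.indicator (E n) (1 : Ω → ℝ) ω ∂P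
      = (∑ t ∈ Finset.range m, ∫ ω, |X t ω| * Set.indicator (E n) (1 : Ω → ℝ) ω ∂P)
        + ∑ t ∈ Finset.Ico m n, ∫ ω, |X t ω| * Set.indicator (E n) (1 : Ω → ℝ) ω ∂P := by
    rw [Finset.range_eq_Ico, ← Finset.sum_Ico_consecutive _ (Nat.zero_le m) hmn,
      ← Finset.range_eq_Ico]
  have hfirst : (∑ t ∈ Finset.range m, ∫ ω, |X t ω| * Set.indicator (E n) (1 : Ω → ℝ) ω ∂P)
      = ∫ ω, G ω * Set.indicator (E n) (1 : Ω → ℝ) ω ∂P := by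
    rw [← integral_finset_sum _ (fun t _ => habs_ind_int t n)]
    refine integral_congr_ae (Filter.Eventually.of_forall fun ω => ?_)
    show (∑ t ∈ Finset.range m, |X t ω| * Set.indicator (E n) (1 : Ω → ℝ) ω)
      = (∑ t ∈ Finset.range m, |X t ω|) * Set.indicator (E n) (1 : Ω → ℝ) ω
    rw [Finset.sum_mul]
  have hsecond : ∑ t ∈ Finset.Ico m n, ∫ ω, |X t ω| * Set.indicator (E n) (1 : Ω → ℝ) ω ∂P
      ≤ η * ε := by
    have hstep : ∀ t ∈ Finset.Ico m n,
        ∫ ω, |X t ω| * Set.indicator (E n) (1 : Ω → ℝ) ω ∂P ≤ η * p t := by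
      intro t ht
      rw [← wabs t]
      refine integral_mono (habs_ind_int t n) (habs_ind_int t t) (fun ω => ?_)
      have hsub : E n ⊆ E t := rwE_antitone X (Set.Iio 0) (Finset.mem_Ico.1 ht).2.le
      by_cases hmem : ω ∈ E n
      · rw [Set.indicator_of_mem hmem, Set.indicator_of_mem (hsub hmem)]
      · rw [Set.indicator_of_notMem hmem, mul_zero]
        by_cases hmem2 : ω ∈ E t
        · rw [Set.indicator_of_mem hmem2, Pi.one_apply, mul_one]
          exact abs_nonneg _
        · rw [Set.indicator_of_notMem hmem2, mul_zero]
    calc ∑ t ∈ Finset.Ico m n, ∫ ω, |X t ω| * Set.indicator (E n) (1 : Ω → ℝ) ω ∂P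
        ≤ ∑ t ∈ Finset.Ico m n, η * p t := Finset.sum_le_sum hstep
      _ = η * ∑ t ∈ Finset.Ico m n, p t := by rw [Finset.mul_sum]
      _ ≤ η * ε := mul_le_mul_of_nonneg_left (htail n hmn) hηnn
  have hηε : η * ε ≤ δ / 2 := by
    have h2 : (0:ℝ) < 2 * (η + 1) := by nlinarith
    rw [hε_def, ← mul_div_assoc, div_le_div_iff₀ h2 (by norm_num : (0:ℝ) < 2)]
    nlinarith
  have hcontr := hfin n hn1
  have h1 : δ ≤ -(∫ ω, (∑ i ∈ Finset.range n, X i ω)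
      * Set.indicator (E n) (1 : Ω → ℝ) ω ∂P) := by linarith
  rw [hsplit, hfirst] at hneg_bound
  linarith
end

open MeasureTheory ProbabilityTheory ENNReal

/-- For i.i.d. integrable `X` with mean `μ ≥ 0` and `E|X_1| > 0`, the first times
`T_0 = inf {t ≥ 1 : S_t ≥ 0}` and `T_c = inf {t ≥ 1 : S_t > c}` satisfy
`E T_c ≥ E T_0 = ∞` when `μ = 0`, and `E T_c < ∞` when `μ > 0`. -/
theorem random_walk_hitting_time_expectation
    {Ω : Type*} [MeasurableSpace Ω] (P : Measure Ω) [IsProbabilityMeasure P]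
    (X : ℕ → Ω → ℝ) (hmeas : ∀ t, Measurable (X t))
    (hindep : iIndepFun X P)
    (hident : ∀ t, IdentDistrib (X t) (X 0) P P)
    (hint : Integrable (X 0) P)
    (μ : ℝ) (hμ : ∫ ω, X 0 ω ∂P = μ) (hμ0 : 0 ≤ μ)
    (habs : 0 < ∫ ω, |X 0 ω| ∂P)
    (S : Ω → ℕ → ℝ) (hS : ∀ ω t, S ω t = ∑ i ∈ Finset.range t, X i ω)
    (c : ℝ) (hc : 0 < c) :
    (μ = 0 →
      (∫⁻ ω, (⨅ t ∈ {t : ℕ | 1 ≤ t ∧ 0 ≤ S ω t}, (t : ℝ≥0∞)) ∂P = ⊤ ∧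
        ∫⁻ ω, (⨅ t ∈ {t : ℕ | 1 ≤ t ∧ 0 ≤ S ω t}, (t : ℝ≥0∞)) ∂P
          ≤ ∫⁻ ω, (⨅ t ∈ {t : ℕ | 1 ≤ t ∧ c < S ω t}, (t : ℝ≥0∞)) ∂P)) ∧
    (0 < μ →
      ∫⁻ ω, (⨅ t ∈ {t : ℕ | 1 ≤ t ∧ c < S ω t}, (t : ℝ≥0∞)) ∂P < ⊤) := by
  have hset0 : ∀ ω : Ω, {t : ℕ | 1 ≤ t ∧ 0 ≤ S ω t}
      = {t : ℕ | 1 ≤ t ∧ (∑ i ∈ Finset.range t, X i ω) ∉ Set.Iio 0} := by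
    intro ω; ext t; simp [hS, Set.mem_Iio, not_lt]
  have hsetc : ∀ ω : Ω, {t : ℕ | 1 ≤ t ∧ c < S ω t}
      = {t : ℕ | 1 ≤ t ∧ (∑ i ∈ Finset.range t, X i ω) ∉ Set.Iic c} := by
    intro ω; ext t; simp [hS, Set.mem_Iic, not_le]
  have hmono_pt : ∀ ω : Ω, (⨅ t ∈ {t : ℕ | 1 ≤ t ∧ 0 ≤ S ω t}, (t : ℝ≥0∞))
      ≤ ⨅ t ∈ {t : ℕ | 1 ≤ t ∧ c < S ω t}, (t : ℝ≥0∞) := by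
    intro ω
    exact biInf_mono fun t ht => ⟨ht.1, le_of_lt (hc.trans ht.2)⟩
  refine ⟨fun hμzero => ⟨?_, lintegral_mono hmono_pt⟩, fun hμpos => ?_⟩
  · rw [lintegral_congr (fun ω => by rw [hset0 ω]),
      lintegral_hitting P hmeas measurableSet_Iio]
    exact tsum_rwE_eq_top P hmeas hindep hident hint (hμzero ▸ hμ) habs
  · rw [lintegral_congr (fun ω => by rw [hsetc ω]),
      lintegral_hitting P hmeas measurableSet_Iic]
    exact tsum_rwE_lt_top P hmeas hindep hident hint hμ hμpos hc
end

section
/- Let (X_t)_{t≥1} be i.i.d. random variables uniformly distributed on [−δ, δ] with δ > 0, let α > 1, and define Q_1 = X_1 and Q_t = ∑_{i=1}^{t−1} X_i + α·X_t for t ≥ 2. Let T_0' = inf{ t ≥ 1 : Q_t ≥ 0 }. Then E[T_0'] = ∞. -/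
open MeasureTheory ProbabilityTheory ENNReal Set
open scoped NNReal
open scoped Fin.NatCast Fin.CommRing

noncomputable def unifM (δ : ℝ) : Measure ℝ :=
  (ENNReal.ofReal (2 * δ))⁻¹ • volume.restrict (Set.Icc (-δ) δ)

lemma unifM_prob {δ : ℝ} (hδ : 0 < δ) : IsProbabilityMeasure (unifM δ) := by
  constructor
  rw [unifM, Measure.smul_apply, Measure.restrict_apply MeasurableSet.univ,
    Set.univ_inter, Real.volume_Icc, smul_eq_mul]
  rw [show δ - -δ = 2 * δ by ring]
  exact ENNReal.inv_mul_cancel (by positivity) ofReal_ne_top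

lemma unifM_neg {δ : ℝ} : MeasurePreserving (fun x : ℝ => -x) (unifM δ) (unifM δ) := by
  have h1 : MeasurePreserving (fun x : ℝ => -x)
      (volume.restrict ((fun x : ℝ => -x) ⁻¹' Set.Icc (-δ) δ)) (volume.restrict (Set.Icc (-δ) δ)) :=
    (Measure.measurePreserving_neg (volume : Measure ℝ)).restrict_preimage measurableSet_Icc
  have h2 : (fun x : ℝ => -x) ⁻¹' Set.Icc (-δ) δ = Set.Icc (-δ) δ := by
    ext x; simp only [Set.mem_preimage, Set.mem_Icc]; constructor <;> intro h <;>
      constructor <;> linarith [h.1, h.2]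
  rw [h2] at h1
  refine ⟨measurable_neg, ?_⟩
  rw [unifM, Measure.map_smul, h1.map_eq]

def Cset (δ : ℝ) (k : ℕ) [NeZero k] : Set (Fin k → ℝ) :=
  {y | (∀ i, y i ∈ Set.Icc (-δ) δ) ∧
      ∀ j, 1 ≤ j → j ≤ k → ∑ i ∈ Finset.range j, y (i : Fin k) ≤ 0}

lemma sum_meas {k j : ℕ} [NeZero k] :
    Measurable (fun y : Fin k → ℝ => ∑ i ∈ Finset.range j, y (i : Fin k)) :=
  Finset.measurable_sum _ fun i _ => measurable_pi_apply _

lemma Cset_meas (δ : ℝ) (k : ℕ) [NeZero k] : MeasurableSet (Cset δ k) := by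
  have h1 : MeasurableSet {y : Fin k → ℝ | ∀ i, y i ∈ Set.Icc (-δ) δ} := by
    rw [Set.setOf_forall]
    exact MeasurableSet.iInter fun i => (measurable_pi_apply i) measurableSet_Icc
  have h2 : MeasurableSet {y : Fin k → ℝ |
      ∀ j, 1 ≤ j → j ≤ k → ∑ i ∈ Finset.range j, y (i : Fin k) ≤ 0} := by
    rw [Set.setOf_forall]
    refine MeasurableSet.iInter fun j => ?_
    by_cases hj : 1 ≤ j ∧ j ≤ k
    · have : {y : Fin k → ℝ | 1 ≤ j → j ≤ k → ∑ i ∈ Finset.range j, y (i : Fin k) ≤ 0}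
          = (fun y : Fin k → ℝ => ∑ i ∈ Finset.range j, y (i : Fin k)) ⁻¹' Set.Iic 0 := by
        ext y; simp [hj.1, hj.2]
      rw [this]; exact sum_meas measurableSet_Iic
    · have : {y : Fin k → ℝ | 1 ≤ j → j ≤ k → ∑ i ∈ Finset.range j, y (i : Fin k) ≤ 0}
          = Set.univ := by
        ext y; simp only [Set.mem_setOf_eq, Set.mem_univ, iff_true]
        intro h1' h2'; exact absurd ⟨h1', h2'⟩ hj
      rw [this]; exact MeasurableSet.univ
  exact h1.inter h2

lemma cover {δ : ℝ} {k : ℕ} [NeZero k] (hk : 0 < k) (y : Fin k → ℝ)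
    (hbox : ∀ i, y i ∈ Set.Icc (-δ) δ)
    (hσ : ∑ i ∈ Finset.range k, y (i : Fin k) ≤ 0) :
    ∃ r : Fin k, (fun i => y (i + r)) ∈ Cset δ k := by
  set s : ℕ → ℝ := fun j => ∑ i ∈ Finset.range j, y (i : Fin k) with hs
  have idA : ∀ a b : ℕ, ∑ i ∈ Finset.range b, y ((a + i : ℕ) : Fin k) = s (a + b) - s a := by
    intro a b
    have h := Finset.sum_Ico_eq_sum_range (f := fun i : ℕ => y (i : Fin k)) (m := a) (n := a + b)
    simp only [Nat.add_sub_cancel_left] at h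
    rw [← h, Finset.sum_Ico_eq_sub _ (Nat.le_add_right a b)]
  have idB : ∀ a : ℕ, ∑ i ∈ Finset.range k, y ((a + i : ℕ) : Fin k) = s k := by
    intro a
    have h1 : ∑ i ∈ Finset.range k, y ((a + i : ℕ) : Fin k)
        = ∑ t : Fin k, y ((a : Fin k) + t) := by
      rw [← Fin.sum_univ_eq_sum_range (fun i : ℕ => y ((a + i : ℕ) : Fin k)) k]
      refine Finset.sum_congr rfl fun t _ => ?_
      congr 1
      push_cast
      rfl
    have h2 : ∑ t : Fin k, y ((a : Fin k) + t) = ∑ t : Fin k, y t :=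
      Fintype.sum_equiv (Equiv.addLeft (a : Fin k)) _ _ (fun t => rfl)
    have h3 : ∑ t : Fin k, y t = s k := by
      show _ = ∑ i ∈ Finset.range k, y (i : Fin k)
      rw [← Fin.sum_univ_eq_sum_range (fun i : ℕ => y (i : Fin k)) k]
      exact Finset.sum_congr rfl fun t _ => by rw [Fin.cast_val_eq_self]
    rw [h1, h2, h3]
  have per : ∀ a : ℕ, s (a + k) = s a + s k := by
    intro a
    have := idA a k
    rw [idB a] at this
    linarith
  obtain ⟨r, hrmem, hrmax⟩ :=
    Finset.exists_max_image (Finset.range k) s ⟨0, Finset.mem_range.2 hk⟩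
  have hrk : r < k := Finset.mem_range.1 hrmem
  have main : ∀ j, 1 ≤ j → j ≤ k → s (r + j) ≤ s r := by
    intro j h1 h2
    rcases lt_or_ge (r + j) k with h | h
    · exact hrmax _ (Finset.mem_range.2 h)
    · have e : r + j = (r + j - k) + k := by omega
      rw [e, per]
      have hlt : r + j - k < k := by omega
      have := hrmax _ (Finset.mem_range.2 hlt)
      linarith
  refine ⟨(r : Fin k), ?_, ?_⟩
  · intro i; exact hbox _
  · intro j h1 h2
    have e : ∀ i : ℕ, ((i : Fin k) + (r : Fin k)) = ((r + i : ℕ) : Fin k) := by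
      intro i; push_cast; ring
    calc ∑ i ∈ Finset.range j, y ((i : Fin k) + (r : Fin k))
        = ∑ i ∈ Finset.range j, y ((r + i : ℕ) : Fin k) :=
          Finset.sum_congr rfl fun i _ => by rw [e]
      _ = s (r + j) - s r := idA r j
      _ ≤ 0 := by linarith [main j h1 h2]

noncomputable def rotMap {k : ℕ} [NeZero k] (r : Fin k) : (Fin k → ℝ) ≃ᵐ (Fin k → ℝ) :=
  MeasurableEquiv.arrowCongr' (Equiv.addRight r).symm (MeasurableEquiv.refl ℝ)

lemma rotMap_apply {k : ℕ} [NeZero k] (r : Fin k) (y : Fin k → ℝ) :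
    rotMap r y = fun i => y (i + r) := rfl

lemma rotMap_pres {δ : ℝ} (hδ : 0 < δ) {k : ℕ} [NeZero k] (r : Fin k) :
    MeasurePreserving (rotMap r) (Measure.pi fun _ : Fin k => unifM δ)
      (Measure.pi fun _ : Fin k => unifM δ) := by
  haveI := unifM_prob hδ
  exact measurePreserving_arrowCongr' (fun _ => unifM δ) (fun _ => unifM δ)
    (Equiv.addRight r).symm (MeasurableEquiv.refl ℝ)
    (fun i => ⟨measurable_id, Measure.map_id⟩)

lemma core {δ : ℝ} (hδ : 0 < δ) (k : ℕ) [NeZero k] :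
    (2 * k : ℝ≥0∞)⁻¹ ≤ Measure.pi (fun _ : Fin k => unifM δ) (Cset δ k) := by
  have hk : 0 < k := Nat.pos_of_ne_zero (NeZero.ne k)
  haveI := unifM_prob hδ
  set π := Measure.pi (fun _ : Fin k => unifM δ) with hπ
  have hIccfull : unifM δ (Set.Icc (-δ) δ) = 1 := by
    rw [unifM, Measure.smul_apply, Measure.restrict_apply measurableSet_Icc,
      Set.inter_self, Real.volume_Icc, smul_eq_mul, show δ - -δ = 2 * δ by ring]
    exact ENNReal.inv_mul_cancel (by positivity) ofReal_ne_top
  have hDbox : π (Set.univ.pi fun _ : Fin k => Set.Icc (-δ) δ) = 1 := by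
    rw [hπ, Measure.pi_pi]
    simp [hIccfull]
  have hD : MeasurableSet (Set.univ.pi fun _ : Fin k => Set.Icc (-δ) δ) :=
    MeasurableSet.univ_pi fun _ => measurableSet_Icc
  have hSm : MeasurableSet {y : Fin k → ℝ | ∑ i ∈ Finset.range k, y (i : Fin k) ≤ 0} :=
    sum_meas measurableSet_Iic
  set D := Set.univ.pi fun _ : Fin k => Set.Icc (-δ) δ
  set Ele := D ∩ {y : Fin k → ℝ | ∑ i ∈ Finset.range k, y (i : Fin k) ≤ 0} with hEle
  set Ege := D ∩ {y : Fin k → ℝ | 0 ≤ ∑ i ∈ Finset.range k, y (i : Fin k)} with hEge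
  have hneg : MeasurePreserving (fun y : Fin k → ℝ => fun i => -(y i)) π π :=
    measurePreserving_pi _ _ (fun _ => unifM_neg)
  have hpre : (fun y : Fin k → ℝ => fun i => -(y i)) ⁻¹' Ele = Ege := by
    ext y
    simp only [hEle, hEge, Set.mem_preimage, Set.mem_inter_iff, Set.mem_pi, Set.mem_univ,
      forall_true_left, Set.mem_setOf_eq, Set.mem_Icc, D]
    rw [Finset.sum_neg_distrib]
    constructor
    · rintro ⟨hb, hsum⟩
      exact ⟨fun i => ⟨by linarith [(hb i).2], by linarith [(hb i).1]⟩,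
        by linarith⟩
    · rintro ⟨hb, hsum⟩
      exact ⟨fun i => ⟨by linarith [(hb i).2], by linarith [(hb i).1]⟩,
        by linarith⟩
  have hEq : π Ele = π Ege := by
    rw [← hpre, hneg.measure_preimage (hD.inter hSm).nullMeasurableSet]
  have hHalf : 1 ≤ 2 * π Ele := by
    have hsub : D ⊆ Ele ∪ Ege := by
      intro y hy
      rcases le_or_gt (∑ i ∈ Finset.range k, y (i : Fin k)) 0 with h | h
      · exact Or.inl ⟨hy, h⟩
      · exact Or.inr ⟨hy, h.le⟩
    calc (1 : ℝ≥0∞) = π D := hDbox.symm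
      _ ≤ π (Ele ∪ Ege) := measure_mono hsub
      _ ≤ π Ele + π Ege := measure_union_le _ _
      _ = 2 * π Ele := by rw [← hEq, two_mul]
  have hcover : Ele ⊆ ⋃ r : Fin k, (rotMap r) ⁻¹' (Cset δ k) := by
    rintro y ⟨hyD, hysum⟩
    have hbox : ∀ i, y i ∈ Set.Icc (-δ) δ := fun i => hyD i trivial
    obtain ⟨r, hr⟩ := cover hk y hbox hysum
    exact Set.mem_iUnion.2 ⟨r, by rwa [Set.mem_preimage, rotMap_apply]⟩
  have hbound : π Ele ≤ k * π (Cset δ k) := by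
    calc π Ele ≤ π (⋃ r : Fin k, (rotMap r) ⁻¹' (Cset δ k)) := measure_mono hcover
      _ ≤ ∑ r : Fin k, π ((rotMap r) ⁻¹' (Cset δ k)) := measure_iUnion_fintype_le _ _
      _ = ∑ _r : Fin k, π (Cset δ k) := by
          refine Finset.sum_congr rfl fun r _ => ?_
          exact (rotMap_pres hδ r).measure_preimage (Cset_meas δ k).nullMeasurableSet
      _ = k * π (Cset δ k) := by
          rw [Finset.sum_const, Finset.card_univ, Fintype.card_fin, nsmul_eq_mul]
  have h1 : 1 ≤ 2 * (k * π (Cset δ k)) := le_trans hHalf (mul_le_mul_right hbound 2)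
  have h2k : ((2 * k : ℝ≥0∞)) ≠ 0 := by simp [hk.ne']
  have h2ktop : ((2 * k : ℝ≥0∞)) ≠ ⊤ := by simp [ENNReal.mul_ne_top]
  calc (2 * k : ℝ≥0∞)⁻¹ = (2 * k : ℝ≥0∞)⁻¹ * 1 := (mul_one _).symm
    _ ≤ (2 * k : ℝ≥0∞)⁻¹ * (2 * (k * π (Cset δ k))) := mul_le_mul_right h1 _
    _ = ((2 * k : ℝ≥0∞)⁻¹ * (2 * k)) * π (Cset δ k) := by ring_nf
    _ = π (Cset δ k) := by rw [ENNReal.inv_mul_cancel h2k h2ktop, one_mul]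

lemma map_tuple {Ω : Type*} [MeasurableSpace Ω] (P : Measure Ω) [IsProbabilityMeasure P]
    {δ : ℝ} (hδ : 0 < δ) (X : ℕ → Ω → ℝ) (hmeas : ∀ t, Measurable (X t))
    (hindep : iIndepFun X P)
    (hunif : ∀ t, Measure.map (X t) P = unifM δ)
    (m k : ℕ) [NeZero k] :
    Measure.map (fun ω (j : Fin k) => X (m + (j : ℕ)) ω) P
      = Measure.pi (fun _ : Fin k => unifM δ) := by
  haveI := unifM_prob hδ
  have hΦ : Measurable (fun ω (j : Fin k) => X (m + (j : ℕ)) ω) :=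
    measurable_pi_lambda _ fun j => hmeas _
  refine (Measure.pi_eq fun s hs => ?_).symm
  classical
  set sets : ℕ → Set ℝ := fun i => ⋂ (j : Fin k) (_ : m + (j : ℕ) = i), s j with hsets
  have hsets_meas : ∀ i, MeasurableSet (sets i) :=
    fun i => MeasurableSet.iInter fun j => MeasurableSet.iInter fun _ => hs j
  have hsets_eq : ∀ j : Fin k, sets (m + (j : ℕ)) = s j := by
    intro j
    ext x
    simp only [hsets, Set.mem_iInter]
    constructor
    · intro h; exact h j rfl
    · intro hx j' hj'
      have : j' = j := by
        have : (j' : ℕ) = (j : ℕ) := by omega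
        exact Fin.ext this
      subst this; exact hx
  set S : Finset ℕ := Finset.image (fun j : ℕ => m + j) (Finset.range k) with hS
  have hset_eq : (fun ω (j : Fin k) => X (m + (j : ℕ)) ω) ⁻¹' (Set.univ.pi s)
      = ⋂ i ∈ S, X i ⁻¹' sets i := by
    ext ω
    simp only [Set.mem_preimage, Set.mem_pi, Set.mem_univ, forall_true_left, Set.mem_iInter]
    constructor
    · intro h i hi
      obtain ⟨j, hj, rfl⟩ := Finset.mem_image.1 hi
      have hjk : j < k := Finset.mem_range.1 hj
      have hcast : ((j : Fin k) : ℕ) = j := Fin.val_natCast j k ▸ Nat.mod_eq_of_lt hjk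
      have h2 := h (j : Fin k)
      rw [← hsets_eq (j : Fin k)] at h2
      rwa [hcast] at h2
    · intro h j
      have hmem : m + (j : ℕ) ∈ S := by
        refine Finset.mem_image.2 ⟨(j : ℕ), Finset.mem_range.2 j.isLt, rfl⟩
      have := h _ hmem
      rwa [hsets_eq j] at this
  rw [Measure.map_apply hΦ (MeasurableSet.univ_pi hs), hset_eq,
    hindep.measure_inter_preimage_eq_mul S (fun i _ => hsets_meas i)]
  rw [hS, Finset.prod_image (by intro a _ b _ h; simp only at h; omega)]
  have heach : ∀ j ∈ Finset.range k, P (X (m + j) ⁻¹' sets (m + j)) = unifM δ (sets (m + j)) := by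
    intro j hj
    rw [← hunif (m + j), Measure.map_apply (hmeas _) (hsets_meas _)]
  rw [Finset.prod_congr rfl heach]
  have : ∀ j ∈ Finset.range k, unifM δ (sets (m + j)) = unifM δ (s (j : Fin k)) := by
    intro j hj
    have hjk : j < k := Finset.mem_range.1 hj
    have hcast : ((j : Fin k) : ℕ) = j := Fin.val_natCast j k ▸ Nat.mod_eq_of_lt hjk
    rw [← hsets_eq (j : Fin k), hcast]
  rw [Finset.prod_congr rfl this, ← Fin.prod_univ_eq_prod_range (fun j => unifM δ (s (j : Fin k))) k]
  exact Finset.prod_congr rfl fun j _ => by rw [Fin.cast_val_eq_self]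

/-- For i.i.d. `X` uniform on `[-δ, δ]` (`δ > 0`), `α > 1`, and
`Q_1 = X_1`, `Q_t = ∑_{i=1}^{t-1} X_i + α X_t` for `t ≥ 2`, the first time
`T_0' = inf {t ≥ 1 : Q_t ≥ 0}` has infinite expectation.
(Here `X k` stands for the paper's `X_{k+1}`.) -/
theorem perturbed_random_walk_hitting_time_infinite
    {Ω : Type*} [MeasurableSpace Ω] (P : Measure Ω) [IsProbabilityMeasure P]
    (δ : ℝ) (hδ : 0 < δ) (α : ℝ) (hα : 1 < α)
    (X : ℕ → Ω → ℝ) (hmeas : ∀ t, Measurable (X t))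
    (hindep : iIndepFun X P)
    (hunif : ∀ t, Measure.map (X t) P
      = (ENNReal.ofReal (2 * δ))⁻¹ • volume.restrict (Set.Icc (-δ) δ))
    (Q : Ω → ℕ → ℝ)
    (hQ1 : ∀ ω, Q ω 1 = X 0 ω)
    (hQ : ∀ ω t, 2 ≤ t →
      Q ω t = (∑ i ∈ Finset.range (t - 1), X i ω) + α * X (t - 1) ω) :
    ∫⁻ ω, (⨅ t ∈ {t : ℕ | 1 ≤ t ∧ 0 ≤ Q ω t}, (t : ℝ≥0∞)) ∂P = ⊤ := by
  classical
  have hunif' : ∀ t, Measure.map (X t) P = unifM δ := hunif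
  haveI := unifM_prob hδ
  -- the head length
  set m : ℕ := ⌊2 * α⌋₊ + 1 with hm
  have hm2α : 2 * α < (m : ℝ) := by
    rw [hm]; push_cast; exact Nat.lt_floor_add_one (2 * α)
  have hm1 : 1 ≤ m := Nat.le_add_left 1 _
  -- hitting events
  set U : ℕ → Set Ω := fun n => {ω | ∀ t, 1 ≤ t → t ≤ n → Q ω t < 0} with hU
  have measQt : ∀ t, 1 ≤ t → MeasurableSet {ω | Q ω t < 0} := by
    intro t ht
    rcases eq_or_lt_of_le ht with h1 | h2
    · have : {ω | Q ω t < 0} = {ω | X 0 ω < 0} := by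
        ext ω; rw [← h1]; rw [Set.mem_setOf_eq, Set.mem_setOf_eq, hQ1]
      rw [this]
      exact measurableSet_lt (hmeas 0) measurable_const
    · have : {ω | Q ω t < 0}
          = {ω | (∑ i ∈ Finset.range (t - 1), X i ω) + α * X (t - 1) ω < 0} := by
        ext ω; rw [Set.mem_setOf_eq, Set.mem_setOf_eq, hQ ω t h2]
      rw [this]
      exact measurableSet_lt
        ((Finset.measurable_sum _ fun i _ => hmeas i).add ((hmeas _).const_mul α))
        measurable_const
  have measU : ∀ n, MeasurableSet (U n) := by
    intro n
    have : U n = ⋂ t ∈ Finset.Icc 1 n, {ω | Q ω t < 0} := by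
      ext ω
      simp only [hU, Set.mem_setOf_eq, Set.mem_iInter, Finset.mem_Icc]
      exact ⟨fun h t ht => h t ht.1 ht.2, fun h t h1 h2 => h t ⟨h1, h2⟩⟩
    rw [this]
    exact Finset.measurableSet_biInter _ fun t ht => measQt t (Finset.mem_Icc.1 ht).1
  -- Step A : partial sums of tail probabilities bound the integral
  have stepA : ∀ F : Finset ℕ, ∑ n ∈ F, P (U n)
      ≤ ∫⁻ ω, (⨅ t ∈ {t : ℕ | 1 ≤ t ∧ 0 ≤ Q ω t}, (t : ℝ≥0∞)) ∂P := by
    intro F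
    have hrw : ∀ n, P (U n) = ∫⁻ ω, (U n).indicator (1 : Ω → ℝ≥0∞) ω ∂P := by
      intro n; rw [lintegral_indicator_one (measU n)]
    calc ∑ n ∈ F, P (U n)
        = ∑ n ∈ F, ∫⁻ ω, (U n).indicator (1 : Ω → ℝ≥0∞) ω ∂P :=
          Finset.sum_congr rfl fun n _ => hrw n
      _ = ∫⁻ ω, ∑ n ∈ F, (U n).indicator (1 : Ω → ℝ≥0∞) ω ∂P :=
          (lintegral_finset_sum _ fun n _ => measurable_const.indicator (measU n)).symm
      _ ≤ ∫⁻ ω, (⨅ t ∈ {t : ℕ | 1 ≤ t ∧ 0 ≤ Q ω t}, (t : ℝ≥0∞)) ∂P := by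
          refine lintegral_mono fun ω => ?_
          set G := F.filter (fun n => ω ∈ U n) with hG
          have hsum : ∑ n ∈ F, (U n).indicator (1 : Ω → ℝ≥0∞) ω = (G.card : ℝ≥0∞) := by
            have h1 : ∀ n ∈ F, (U n).indicator (1 : Ω → ℝ≥0∞) ω
                = if ω ∈ U n then (1 : ℝ≥0∞) else 0 := fun n _ => Set.indicator_apply _ _ _
            rw [Finset.sum_congr rfl h1, ← Finset.sum_filter, ← hG, Finset.sum_const,
              nsmul_eq_mul, mul_one]
          rw [hsum]
          rcases Finset.eq_empty_or_nonempty G with hGe | hGne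
          · simp [hGe]
          · set j0 := G.max' hGne with hj0
            have hj0G : j0 ∈ G := G.max'_mem hGne
            have hωU : ω ∈ U j0 := (Finset.mem_filter.1 hj0G).2
            have hcard : G.card ≤ j0 + 1 := by
              have : G ⊆ Finset.range (j0 + 1) := fun a ha =>
                Finset.mem_range.2 (Nat.lt_succ_of_le (G.le_max' a ha))
              simpa using Finset.card_le_card this
            have hinf : ((j0 + 1 : ℕ) : ℝ≥0∞)
                ≤ ⨅ t ∈ {t : ℕ | 1 ≤ t ∧ 0 ≤ Q ω t}, (t : ℝ≥0∞) := by
              refine le_iInf₂ fun t ht => ?_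
              have h1t : 1 ≤ t := ht.1
              have : j0 + 1 ≤ t := by
                by_contra hc
                push_neg at hc
                exact absurd ht.2 (not_le.2 (hωU t h1t (by omega)))
              exact_mod_cast Nat.cast_le.2 this
            refine le_trans ?_ hinf
            exact_mod_cast Nat.cast_le.2 hcard
  -- head event
  set H : Set Ω := ⋂ i ∈ Finset.range m, X i ⁻¹' Set.Icc (-δ) (-δ/2) with hH
  set c0 := P H with hc0
  have hc0pos : c0 ≠ 0 := by
    have hq : P H = (unifM δ (Set.Icc (-δ) (-δ/2))) ^ m := by
      rw [hH, hindep.measure_inter_preimage_eq_mul (Finset.range m)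
        (sets := fun _ => Set.Icc (-δ) (-δ/2)) (fun i _ => measurableSet_Icc)]
      have heach : ∀ i ∈ Finset.range m, P (X i ⁻¹' Set.Icc (-δ) (-δ/2))
          = unifM δ (Set.Icc (-δ) (-δ/2)) := by
        intro i _
        rw [← hunif' i, Measure.map_apply (hmeas i) measurableSet_Icc]
      rw [Finset.prod_congr rfl heach, Finset.prod_const, Finset.card_range]
    have hqne : unifM δ (Set.Icc (-δ) (-δ/2)) ≠ 0 := by
      rw [unifM, Measure.smul_apply, Measure.restrict_apply measurableSet_Icc, smul_eq_mul]
      have hsub : Set.Icc (-δ) (-δ/2) ∩ Set.Icc (-δ) δ = Set.Icc (-δ) (-δ/2) := by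
        rw [Set.inter_eq_left]
        exact Set.Icc_subset_Icc_right (by linarith)
      rw [hsub, Real.volume_Icc, show -δ/2 - -δ = δ/2 by ring]
      exact mul_ne_zero (ENNReal.inv_ne_zero.2 ofReal_ne_top)
        (ENNReal.ofReal_pos.2 (by linarith)).ne'
    rw [hc0, hq]
    exact pow_ne_zero _ hqne
  -- step B : lower bound for P (U (m+k))
  have stepB : ∀ k : ℕ, 0 < k → c0 * (2 * k : ℝ≥0∞)⁻¹ ≤ P (U (m + k)) := by
    intro k hk
    haveI : NeZero k := ⟨hk.ne'⟩
    set Φ : Ω → (Fin k → ℝ) := fun ω (j : Fin k) => X (m + (j : ℕ)) ω with hΦ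
    have hΦmeas : Measurable Φ := measurable_pi_lambda _ fun j => hmeas _
    set K : Set Ω := Φ ⁻¹' Cset δ k with hK
    -- pointwise inclusion
    have hincl : H ∩ K ⊆ U (m + k) := by
      rintro ω ⟨ωH, ωK⟩
      have hhead : ∀ i, i < m → X i ω ∈ Set.Icc (-δ) (-δ/2) := by
        intro i hi
        exact Set.mem_iInter₂.1 ωH i (Finset.mem_range.2 hi)
      have hboxK : ∀ j : Fin k, X (m + (j : ℕ)) ω ∈ Set.Icc (-δ) δ := ωK.1
      have htail : ∀ d, 1 ≤ d → d ≤ k → ∑ i ∈ Finset.range d, X (m + i) ω ≤ 0 := by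
        intro d h1 h2
        have h3 := ωK.2 d h1 h2
        have h4 : ∀ i ∈ Finset.range d, Φ ω ((i : ℕ) : Fin k) = X (m + i) ω := by
          intro i hi
          have hik : i < k := lt_of_lt_of_le (Finset.mem_range.1 hi) h2
          simp only [hΦ]
          congr 1
          exact congrArg (m + ·) (Fin.val_natCast i k ▸ Nat.mod_eq_of_lt hik)
        rwa [Finset.sum_congr rfl h4] at h3
      have hboxN : ∀ i, m ≤ i → i < m + k → X i ω ∈ Set.Icc (-δ) δ := by
        intro i h1 h2
        have hik : i - m < k := by omega
        have := hboxK ((i - m : ℕ) : Fin k)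
        have hcast : (((i - m : ℕ) : Fin k) : ℕ) = i - m :=
          Fin.val_natCast (i - m) k ▸ Nat.mod_eq_of_lt hik
        rw [hcast] at this
        rwa [show m + (i - m) = i by omega] at this
      set S : ℕ → ℝ := fun j => ∑ i ∈ Finset.range j, X i ω with hS
      have hShead : ∀ j, j ≤ m → S j ≤ -(j : ℝ) * (δ/2) := by
        intro j
        induction j with
        | zero => intro _; simp [hS]
        | succ j ih =>
          intro hjm
          have h1 := ih (by omega)
          have h2 := (hhead j (by omega)).2
          have : S (j+1) = S j + X j ω := Finset.sum_range_succ _ _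
          rw [this]
          push_cast
          linarith
      have hStail : ∀ j, m ≤ j → j ≤ m + k → S j ≤ -(m : ℝ) * (δ/2) := by
        intro j h1 h2
        have hdiff : S j - S m = ∑ i ∈ Finset.range (j - m), X (m + i) ω := by
          rw [hS]
          have := Finset.sum_Ico_eq_sum_range (f := fun i => X i ω) (m := m) (n := j)
          rw [← this, Finset.sum_Ico_eq_sub _ h1]
        have hrest : ∑ i ∈ Finset.range (j - m), X (m + i) ω ≤ 0 := by
          rcases Nat.eq_zero_or_pos (j - m) with h | h
          · simp [h]
          · exact htail _ h (by omega)
        have hm := hShead m le_rfl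
        linarith
      have hSmαδ : -(m : ℝ) * (δ/2) < -α * δ := by nlinarith
      intro t h1t h2t
      rcases eq_or_lt_of_le h1t with h1 | h2
      · rw [← h1, hQ1]
        have := (hhead 0 (by omega)).2
        linarith
      · rw [hQ ω t h2]
        rcases lt_or_ge (t - 1) m with hcase | hcase
        · have hs := hShead (t-1) (by omega)
          have hx := (hhead (t-1) hcase).2
          have hge : (0:ℝ) ≤ (t - 1 : ℕ) := Nat.cast_nonneg _
          nlinarith
        · have hs := hStail (t-1) hcase (by omega)
          have hx := (hboxN (t-1) hcase (by omega)).2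
          nlinarith
    -- independence
    set Sk : Finset ℕ := Finset.image (fun j : ℕ => m + j) (Finset.range k) with hSk
    have hdisj : Disjoint (Finset.range m) Sk := by
      rw [Finset.disjoint_left]
      intro a ha hb
      obtain ⟨j, _, rfl⟩ := Finset.mem_image.1 hb
      have := Finset.mem_range.1 ha
      omega
    have hIF := hindep.indepFun_finset (Finset.range m) Sk hdisj hmeas
    have hψ : ∀ j : Fin k, m + (j : ℕ) ∈ Sk := fun j =>
      Finset.mem_image.2 ⟨(j : ℕ), Finset.mem_range.2 j.isLt, rfl⟩
    set B1 : Set (↥(Finset.range m) → ℝ) :=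
      Set.univ.pi fun _ => Set.Icc (-δ) (-δ/2) with hB1
    have hB1meas : MeasurableSet B1 := MeasurableSet.univ_pi fun _ => measurableSet_Icc
    set B2 : Set (↥Sk → ℝ) :=
      (fun v : ↥Sk → ℝ => fun j : Fin k => v (⟨m + (j : ℕ), hψ j⟩ : ↥Sk)) ⁻¹' Cset δ k
      with hB2
    have hB2meas : MeasurableSet B2 :=
      (measurable_pi_lambda _ fun j => measurable_pi_apply _) (Cset_meas δ k)
    have hHg : H = (fun a (i : ↥(Finset.range m)) => X (i : ℕ) a) ⁻¹' B1 := by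
      ext ω
      constructor
      · intro hω
        intro i _
        exact Set.mem_iInter₂.1 hω (i : ℕ) i.2
      · intro hω
        refine Set.mem_iInter₂.2 fun i hi => ?_
        exact hω (⟨i, hi⟩ : ↥(Finset.range m)) trivial
    have hKg : K = (fun a (i : ↥Sk) => X (i : ℕ) a) ⁻¹' B2 := rfl
    have hprod : P (H ∩ K) = c0 * P K := by
      rw [hHg, hKg, hc0, hHg]
      exact hIF.measure_inter_preimage_eq_mul B1 B2 hB1meas hB2meas
    have hPK : (2 * k : ℝ≥0∞)⁻¹ ≤ P K := by
      have hmap : P K = Measure.pi (fun _ : Fin k => unifM δ) (Cset δ k) := by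
        rw [hK, ← Measure.map_apply hΦmeas (Cset_meas δ k),
          map_tuple P hδ X hmeas hindep hunif' m k]
      rw [hmap]
      exact core hδ k
    calc c0 * (2 * k : ℝ≥0∞)⁻¹ ≤ c0 * P K := mul_le_mul_right hPK c0
      _ = P (H ∩ K) := hprod.symm
      _ ≤ P (U (m + k)) := measure_mono hincl
  -- step C : divergence
  have h3 : ∑' i : ℕ, ((2 * ((i : ℕ) + 1) : ℝ≥0∞))⁻¹ = ⊤ := by
    by_contra hne
    set w : ℕ → ℝ≥0 := fun i => ((2 : ℝ≥0) * ((i : ℝ≥0) + 1))⁻¹ with hw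
    have hne0 : ∀ i : ℕ, ((2 : ℝ≥0) * ((i : ℝ≥0) + 1)) ≠ 0 := by
      intro i
      have h1 : (0 : ℝ≥0) < (i : ℝ≥0) + 1 := add_pos_of_nonneg_of_pos zero_le one_pos
      exact (mul_pos two_pos h1).ne'
    have hco : ∀ i : ℕ, ((2 * ((i : ℕ) + 1) : ℝ≥0∞))⁻¹ = ((w i : ℝ≥0) : ℝ≥0∞) := by
      intro i
      simp only [hw]
      rw [ENNReal.coe_inv (hne0 i)]
      norm_cast
      rw [ENNReal.coe_inv (by positivity), ENNReal.coe_natCast]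
    rw [funext hco] at hne
    have hsummable : Summable w := ENNReal.tsum_coe_ne_top_iff_summable.1 hne
    have hr : Summable (fun i : ℕ => ((2 * ((i : ℕ) + 1) : ℝ))⁻¹) := by
      have h2 := NNReal.summable_coe.2 hsummable
      rw [hw] at h2
      convert h2 using 2 with i
      norm_num
    have hr2 : Summable (fun i : ℕ => 1 / ((i : ℝ) + 1)) := by
      have := hr.mul_left 2
      convert this using 2 with i
      case e'_3 => rfl
      field_simp
    have hr3 : Summable (fun n : ℕ => 1 / (n : ℝ)) := by
      refine (summable_nat_add_iff 1).1 ?_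
      convert hr2 using 2 with i
      case e'_3 => rfl
      push_cast
      ring
    exact Real.not_summable_one_div_natCast hr3
  have hdiv : (⊤ : ℝ≥0∞) ≤ ∑' n : ℕ, P (U n) := by
    have h1 : ∀ i : ℕ, c0 * ((2 * ((i : ℕ) + 1) : ℝ≥0∞))⁻¹ ≤ P (U (m + (i + 1))) := by
      intro i
      have := stepB (i + 1) (Nat.succ_pos i)
      convert this using 3
      push_cast
      ring
    have h2 : ∑' i : ℕ, P (U (m + (i + 1))) ≤ ∑' n : ℕ, P (U n) :=
      ENNReal.tsum_comp_le_tsum_of_injective (f := fun i : ℕ => m + (i + 1))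
        (fun a b hab => by dsimp only at hab; omega) _
    calc (⊤ : ℝ≥0∞) = c0 * ∑' i : ℕ, ((2 * ((i : ℕ) + 1) : ℝ≥0∞))⁻¹ := by
          rw [h3, ENNReal.mul_top hc0pos]
      _ = ∑' i : ℕ, c0 * ((2 * ((i : ℕ) + 1) : ℝ≥0∞))⁻¹ := ENNReal.tsum_mul_left.symm
      _ ≤ ∑' i : ℕ, P (U (m + (i + 1))) := ENNReal.tsum_le_tsum h1
      _ ≤ ∑' n : ℕ, P (U n) := h2
  rw [eq_top_iff]
  refine le_trans hdiv ?_
  rw [ENNReal.tsum_eq_iSup_sum]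
  exact iSup_le stepA
end

section
/- (Noise-accumulation representation after consensus.) Let n ≥ 2, ε > 0, and let (ξ(t))_{t≥1} be any real sequence with |ξ(t)| ≤ δ2 ≤ ε for all t. Suppose the opinions evolve by the noisy HK update and d_V(0) = max_{i,j} |x_i(0) − x_j(0)| ≤ ε. Then for every t ≥ 0 and every agent i, x_i(t+1) = (1/n)·∑_{j=1}^n x_j(0) + (1/n)·∑_{k=1}^{t} ξ(k) + 1_{{i=1}}·ξ(t+1). -/
lemma hkStep_of_close {n : ℕ} {ε : ℝ} {y : Fin n → ℝ} (h : ∀ i j, |y i - y j| ≤ ε)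
    (ξ : ℝ) (i : Fin n) :
    hkStep ε y ξ i = (∑ j, y j) / (n : ℝ) + (if (i : ℕ) = 0 then ξ else 0) := by
  have hnbr : hkNbr ε y i = Finset.univ := by
    ext j; simp [hkNbr, h j i]
  simp [hkStep, hnbr]

/-- Noise-accumulation representation after consensus: if initially all opinions are within
`ε` of each other and `|ξ(t)| ≤ δ2 ≤ ε`, then
`x_i(t+1) = (1/n) ∑_j x_j(0) + (1/n) ∑_{k=1}^t ξ(k) + 1_{i=1} ξ(t+1)`. -/
theorem hk_noise_accumulation (n : ℕ) (hn : 2 ≤ n) (ε δ2 : ℝ) (hε : 0 < ε)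
    (hδ2 : δ2 ≤ ε)
    (ξ : ℕ → ℝ) (hξ : ∀ t, 1 ≤ t → |ξ t| ≤ δ2)
    (x : ℕ → Fin n → ℝ)
    (hupd : ∀ t i, x (t + 1) i = hkStep ε (x t) (ξ (t + 1)) i)
    (hd0 : ∀ i j, |x 0 i - x 0 j| ≤ ε) :
    ∀ t i, x (t + 1) i
      = (∑ j, x 0 j) / (n : ℝ) + (∑ k ∈ Finset.Icc 1 t, ξ k) / (n : ℝ)
        + (if (i : ℕ) = 0 then ξ (t + 1) else 0) := by
  have hn0 : (n : ℝ) ≠ 0 := by positivity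
  have hξε : ∀ t, 1 ≤ t → |ξ t| ≤ ε := fun t ht => (hξ t ht).trans hδ2
  intro t
  induction t with
  | zero =>
    intro i
    rw [hupd 0 i, hkStep_of_close hd0]
    simp
  | succ t ih =>
    intro i
    have hclose : ∀ i j, |x (t + 1) i - x (t + 1) j| ≤ ε := by
      intro i j
      have hb := hξε (t + 1) (by omega)
      rw [ih i, ih j, add_sub_add_left_eq_sub]
      by_cases hi : (i : ℕ) = 0 <;> by_cases hj : (j : ℕ) = 0 <;>
        simp [hi, hj, abs_neg] <;> first | exact hb | exact hε.le
    have hsum : (∑ j, x (t + 1) j)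
        = (n : ℝ) * ((∑ j, x 0 j) / (n : ℝ) + (∑ k ∈ Finset.Icc 1 t, ξ k) / (n : ℝ))
          + ξ (t + 1) := by
      have h0 : (∑ j : Fin n, if (j : ℕ) = 0 then ξ (t + 1) else 0) = ξ (t + 1) := by
        have : ∀ j : Fin n, ((j : ℕ) = 0) ↔ (j = ⟨0, by omega⟩) := by
          intro j; constructor
          · intro h; exact Fin.ext h
          · intro h; simp [h]
        simp only [this]
        rw [Finset.sum_ite_eq' Finset.univ]
        simp
      calc (∑ j, x (t + 1) j)
          = ∑ j : Fin n, ((∑ j, x 0 j) / (n : ℝ) + (∑ k ∈ Finset.Icc 1 t, ξ k) / (n : ℝ)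
              + (if (j : ℕ) = 0 then ξ (t + 1) else 0)) := by
            exact Finset.sum_congr rfl fun j _ => ih j
        _ = _ := by
            rw [Finset.sum_add_distrib, h0, Finset.sum_const]
            simp [mul_add]
    rw [hupd (t + 1) i, hkStep_of_close hclose, hsum]
    have hIcc : Finset.Icc 1 (t + 1) = insert (t + 1) (Finset.Icc 1 t) := by
      ext k; simp [Finset.mem_Icc, Finset.mem_insert]; omega
    rw [hIcc, Finset.sum_insert (by simp)]
    field_simp
    ring
end

section
/- (One-step contraction toward the leader.) Let n ≥ 2, ε > 0, 0 < δ2 ≤ ε/(2n), and consider n ordinary agents together with a leader agent with fixed opinion A. Suppose at time t the opinions satisfy max_{i,j∈V} |x_i(t) − x_j(t)| ≤ ε and max_{i∈V} |x_i(t) − A| ≤ ε, and x(t+1) is obtained by the noisy HK update with leader using a noise value ξ(t+1) with |ξ(t+1)| ≤ δ2. Then x_i(t+1) = (A + ∑_{k=1}^n x_k(t))/(n+1) + 1_{{i=1}}·ξ(t+1) for all i ∈ V; consequently max_{i,j∈V} |x_i(t+1) − x_j(t+1)| = |ξ(t+1)| ≤ δ2 ≤ ε and max_{i∈V} |A − x_i(t+1)|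 ≤ (n/(n+1))·max_{i∈V} |A − x_i(t)| + δ2 ≤ ε. -/
/-- Noisy HK update with a leader of fixed opinion `A`: the leader's opinion enters the
average whenever `|A - x i| ≤ ε`, and agent `1` (index `0`) receives the noise `ξ`. -/
noncomputable def hkLeaderStep {n : ℕ} (ε A : ℝ) (x : Fin n → ℝ) (ξ : ℝ) (i : Fin n) : ℝ :=
  ((∑ j ∈ hkNbr ε x i, x j) + (if |A - x i| ≤ ε then A else 0))
    / (((hkNbr ε x i).card : ℝ) + (if |A - x i| ≤ ε then 1 else 0))
  + (if (i : ℕ) = 0 then ξ else 0)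

/-- One-step contraction toward the leader. -/
theorem hk_leader_one_step_contraction (n : ℕ) (hn : 2 ≤ n) (ε δ2 A : ℝ)
    (hε : 0 < ε) (hδ2pos : 0 < δ2) (hδ2 : δ2 ≤ ε / (2 * n))
    (x xnext : Fin n → ℝ) (ξ : ℝ)
    (hd : ∀ i j, |x i - x j| ≤ ε)
    (hdA : ∀ i, |x i - A| ≤ ε)
    (hξ : |ξ| ≤ δ2)
    (hupd : ∀ i, xnext i = hkLeaderStep ε A x ξ i) :
    (∀ i, xnext i = (A + ∑ k, x k) / ((n : ℝ) + 1)
        + (if (i : ℕ) = 0 then ξ else 0)) ∧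
    (⨆ i, ⨆ j, |xnext i - xnext j|) = |ξ| ∧
    (⨆ i, |A - xnext i|) ≤ ((n : ℝ) / (n + 1)) * (⨆ i, |A - x i|) + δ2 ∧
    ((n : ℝ) / (n + 1)) * (⨆ i, |A - x i|) + δ2 ≤ ε := by
  have hne : Nonempty (Fin n) := ⟨⟨0, by omega⟩⟩
  have hN2 : (2 : ℝ) ≤ (n : ℝ) := by exact_mod_cast hn
  have hNpos : (0 : ℝ) < (n : ℝ) := by linarith
  have hN1 : (0 : ℝ) < (n : ℝ) + 1 := by linarith
  have hAif : ∀ i, |A - x i| ≤ ε := fun i => by rw [abs_sub_comm]; exact hdA i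
  have hnbr : ∀ i, hkNbr ε x i = Finset.univ := by
    intro i
    apply Finset.filter_true_of_mem
    intro j _; exact hd j i
  -- Part 1
  have h1 : ∀ i, xnext i = (A + ∑ k, x k) / ((n : ℝ) + 1)
      + (if (i : ℕ) = 0 then ξ else 0) := by
    intro i
    rw [hupd i]; unfold hkLeaderStep
    rw [hnbr i, if_pos (hAif i), if_pos (hAif i), Finset.card_univ, Fintype.card_fin,
      add_comm (∑ j, x j) A]
  set c : ℝ := (A + ∑ k, x k) / ((n : ℝ) + 1) with hc
  -- Part 2
  let i0 : Fin n := ⟨0, by omega⟩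
  let i1 : Fin n := ⟨1, by omega⟩
  have hdiff : ∀ i j : Fin n, |xnext i - xnext j| ≤ |ξ| := by
    intro i j
    rw [h1 i, h1 j]
    split_ifs <;> simp [abs_nonneg, abs_sub_comm]
  have heq01 : |xnext i0 - xnext i1| = |ξ| := by
    rw [h1 i0, h1 i1]
    norm_num [i0, i1]
  have h2 : (⨆ i, ⨆ j, |xnext i - xnext j|) = |ξ| := by
    apply le_antisymm
    · apply ciSup_le; intro i; apply ciSup_le; intro j; exact hdiff i j
    · calc |ξ| = |xnext i0 - xnext i1| := heq01.symm
        _ ≤ ⨆ j, |xnext i0 - xnext j| :=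
            le_ciSup (f := fun j => |xnext i0 - xnext j|) (Set.Finite.bddAbove (Set.finite_range _)) i1
        _ ≤ ⨆ i, ⨆ j, |xnext i - xnext j| :=
            le_ciSup (f := fun i => ⨆ j, |xnext i - xnext j|) (Set.Finite.bddAbove (Set.finite_range _)) i0
  -- Part 3
  set M : ℝ := ⨆ i, |A - x i| with hM
  have hMle : ∀ i, |A - x i| ≤ M := fun i =>
    le_ciSup (f := fun i => |A - x i|) (Set.Finite.bddAbove (Set.finite_range _)) i
  have hMε : M ≤ ε := ciSup_le hAif
  have hAc : A - c = (∑ k, (A - x k)) / ((n : ℝ) + 1) := by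
    rw [hc, Finset.sum_sub_distrib, Finset.sum_const, Finset.card_univ, Fintype.card_fin]
    field_simp
    ring
  have hAcbound : |A - c| ≤ ((n : ℝ) / (n + 1)) * M := by
    rw [hAc, abs_div, abs_of_pos hN1, div_le_iff₀ hN1, mul_right_comm,
      div_mul_cancel₀ _ (ne_of_gt hN1)]
    calc |∑ k, (A - x k)| ≤ ∑ k, |A - x k| := Finset.abs_sum_le_sum_abs _ _
      _ ≤ ∑ _k : Fin n, M := Finset.sum_le_sum fun k _ => hMle k
      _ = (n : ℝ) * M := by rw [Finset.sum_const, Finset.card_univ, Fintype.card_fin]; simp [nsmul_eq_mul]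
  have h3each : ∀ i, |A - xnext i| ≤ ((n : ℝ) / (n + 1)) * M + δ2 := by
    intro i
    rw [h1 i]
    have : A - (c + if (i : ℕ) = 0 then ξ else 0)
        = (A - c) - (if (i : ℕ) = 0 then ξ else 0) := by ring
    rw [this]
    refine (abs_sub _ _).trans ?_
    have habs : |if (i : ℕ) = 0 then ξ else 0| ≤ δ2 := by
      split_ifs
      · exact hξ
      · simpa using hδ2pos.le
    linarith [hAcbound]
  have h3 : (⨆ i, |A - xnext i|) ≤ ((n : ℝ) / (n + 1)) * M + δ2 := ciSup_le h3each
  -- Part 4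
  have hfrac : (0 : ℝ) ≤ (n : ℝ) / (n + 1) := by positivity
  have e2 : ε / (2 * (n : ℝ)) ≤ ε / ((n : ℝ) + 1) := by
    gcongr <;> linarith
  have e1 : (n : ℝ) / (n + 1) * ε + ε / ((n : ℝ) + 1) = ε := by
    field_simp
  have h4 : ((n : ℝ) / (n + 1)) * M + δ2 ≤ ε := by
    have := mul_le_mul_of_nonneg_left hMε hfrac
    linarith
  exact ⟨h1, h2, h3, h4⟩
end
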